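/- arXiv:2305.05405 — 6 statements merged into one kernel-verified Lean document; each statement's English description precedes it below -/
import Mathlib

section
/- In a rooted cactus graph, every simple cycle has exactly two edges incident to its topmost vertex, and these two edges (the 'associated pair' of the cycle) are exactly the edges of the cycle closest to the root; moreover every edge of the graph belongs to at most one such associated pair. -/
def IsCactus {V : Type*} (G : SimpleGraph V) : Prop :=
  G.Connected ∧
    ∀ {u v : V} (c : G.Walk u u) (d : G.Walk v v), c.IsCycle → d.IsCycle →
      ∀ e, e ∈ c.edges → e ∈ d.edges → ∀ f, (f ∈ c.edges ↔ f ∈ d.edges)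

/-- Distance of an edge to the root `r`: the smaller of the distances of its endpoints. -/
noncomputable def edgeDist {V : Type*} (G : SimpleGraph V) (r : V) : Sym2 V → ℕ :=
  Sym2.lift ⟨fun a b => min (G.dist r a) (G.dist r b), fun a b => min_comm _ _⟩

section Aux

open SimpleGraph Walk

set_option linter.unusedSectionVars false

variable {V : Type*} [DecidableEq V] {G : SimpleGraph V}

lemma mem_support_of_mem_edges' {a b : V} {p : G.Walk a b} {x : V} {e : Sym2 V}
    (he : e ∈ p.edges) (hx : x ∈ e) : x ∈ p.support := by
  induction e with
  | h y z =>
    rcases Sym2.mem_iff.mp hx with rfl | rfl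
    · exact p.fst_mem_support_of_mem_edges he
    · exact p.snd_mem_support_of_mem_edges he

lemma aux_countP : ∀ {a b : V} (p : G.Walk a b), p.support.Nodup → ∀ x ∈ p.support,
    p.edges.countP (fun e => decide (x ∈ e)) =
      (if x = a then 0 else 1) + (if x = b then 0 else 1) := by
  intro a b p
  induction p with
  | nil =>
    intro _ x hx
    simp only [support_nil, List.mem_singleton] at hx
    subst hx
    simp
  | @cons a c b h q ih =>
    intro hnd x hx
    simp only [support_cons, List.nodup_cons] at hnd
    obtain ⟨hanq, hqnd⟩ := hnd
    simp only [support_cons, List.mem_cons] at hx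
    rw [edges_cons, List.countP_cons]
    by_cases hxa : x = a
    · subst hxa
      have h0 : q.edges.countP (fun e => decide (x ∈ e)) = 0 := by
        apply List.countP_eq_zero.mpr
        intro e he
        simp only [decide_eq_true_eq]
        exact fun hxe => hanq (mem_support_of_mem_edges' he hxe)
      have hxb : x ≠ b := fun hh => hanq (hh ▸ q.end_mem_support)
      simp [h0, hxb]
    · have hxq : x ∈ q.support := hx.resolve_left hxa
      rw [ih hqnd x hxq]
      by_cases hxc : x = c
      · subst hxc
        simp [hxa, Sym2.mem_iff, Nat.add_comm]
      · have : x ∉ s(a, c) := by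
          rw [Sym2.mem_iff]; rintro (rfl | rfl) <;> [exact hxa rfl; exact hxc rfl]
        simp [hxa, hxc, this]

lemma cycle_countP_start {u : V} (c : G.Walk u u) (hc : c.IsCycle) :
    c.edges.countP (fun e => decide (u ∈ e)) = 2 := by
  cases c with
  | nil => exact absurd rfl hc.ne_nil
  | @cons _ w _ h q =>
    have hq : q.support.Nodup := by
      have := hc.support_nodup
      simpa using this
    rw [edges_cons, List.countP_cons]
    have huq : u ∈ q.support := q.end_mem_support
    rw [aux_countP q hq u huq]
    have huw : u ≠ w := h.ne
    simp [huw, Sym2.mem_iff]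

lemma cycle_countP {u : V} (c : G.Walk u u) (hc : c.IsCycle) {v : V} (hv : v ∈ c.support) :
    c.edges.countP (fun e => decide (v ∈ e)) = 2 := by
  have h1 := cycle_countP_start (c.rotate v hv) (hc.rotate hv)
  rwa [(c.rotate_edges v hv).perm.countP_eq] at h1

variable {V : Type*} [DecidableEq V] {G : SimpleGraph V}

lemma shortest_path_vertex_lt {r v : V} (P : G.Walk r v)
    (hPl : P.length = G.dist r v) {w : V} (hw : w ∈ P.support) (hwv : w ≠ v) :
    G.dist r w < G.dist r v := by
  have h1 : G.dist r w ≤ (P.takeUntil w hw).length := SimpleGraph.dist_le _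
  have h2 := congrArg Walk.length (P.take_spec hw)
  rw [Walk.length_append] at h2
  have h3 : (P.dropUntil w hw).length ≠ 0 := fun h => hwv (Walk.eq_of_length_eq_zero h)
  omega

lemma shortest_path_edge_lt {r v : V} (P : G.Walk r v)
    (hPl : P.length = G.dist r v) (hm : 0 < G.dist r v) {x y : V} (h : s(x, y) ∈ P.edges) :
    G.dist r x < G.dist r v ∨ G.dist r y < G.dist r v := by
  have hx := P.fst_mem_support_of_mem_edges h
  have hy := P.snd_mem_support_of_mem_edges h
  by_cases hxv : x = v
  · subst hxv
    have hyx : y ≠ x := (P.adj_of_mem_edges h).ne'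
    exact Or.inr (shortest_path_vertex_lt P hPl hy hyx)
  · exact Or.inl (shortest_path_vertex_lt P hPl hx hxv)

omit [DecidableEq V] in
lemma end_mem_tail_support {x y : V} (p : G.Walk x y) (hp : ¬ p.Nil) :
    y ∈ p.support.tail := by
  cases p with
  | nil => simp at hp
  | cons h q => simpa using q.end_mem_support

lemma rotate_not_nil {x v : V} {c : G.Walk x x} (hv : v ∈ c.support) (hc : ¬ c.Nil) :
    ¬ (c.rotate v hv).Nil := by
  rw [Walk.nil_iff_length_eq] at hc ⊢
  have h := (c.rotate_edges v hv).perm.length_eq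
  rw [Walk.length_edges, Walk.length_edges] at h
  omega

lemma mem_support_rotate {x v w : V} {c : G.Walk x x} (hv : v ∈ c.support) (hc : ¬ c.Nil) :
    w ∈ (c.rotate v hv).support ↔ w ∈ c.support := by
  have h1 : w ∈ (c.rotate v hv).support ↔ w ∈ (c.rotate v hv).support.tail := by
    constructor
    · intro hw
      rw [Walk.support_eq_cons, List.mem_cons] at hw
      rcases hw with rfl | hw
      · exact end_mem_tail_support _ (rotate_not_nil hv hc)
      · exact hw
    · intro hw
      rw [Walk.support_eq_cons]
      exact List.mem_cons_of_mem _ hw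
  have h2 : w ∈ c.support ↔ w ∈ c.support.tail := by
    constructor
    · intro hw
      rw [Walk.support_eq_cons, List.mem_cons] at hw
      rcases hw with rfl | hw
      · exact end_mem_tail_support _ hc
      · exact hw
    · intro hw
      rw [Walk.support_eq_cons]
      exact List.mem_cons_of_mem _ hw
  rw [h1, h2, (c.support_rotate v hv).perm.mem_iff]

lemma topmost_unique (hG : IsCactus G) (r : V) {u : V} (c : G.Walk u u) (hc : c.IsCycle)
    {v a : V} (hv : v ∈ c.support) (ha : a ∈ c.support)
    (hvmin : ∀ w ∈ c.support, G.dist r v ≤ G.dist r w)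
    (hamin : ∀ w ∈ c.support, G.dist r a ≤ G.dist r w) : v = a := by
  by_contra hne
  set m := G.dist r v with hm
  have hma : G.dist r a = m := le_antisymm (hamin v hv) (hvmin a ha)
  -- m positive
  have hmpos : 0 < m := by
    rcases Nat.eq_zero_or_pos m with h0 | h
    · exfalso
      have hv0 : r = v := hG.1.dist_eq_zero_iff.mp h0
      have ha0 : r = a := hG.1.dist_eq_zero_iff.mp (hma.trans h0)
      exact hne (hv0 ▸ ha0)
    · exact h
  -- shortest paths
  obtain ⟨P, hPp, hPl⟩ := hG.1.exists_path_of_dist r v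
  obtain ⟨Q, hQp, hQl⟩ := hG.1.exists_path_of_dist r a
  have hPlt : ∀ w ∈ P.support, w ≠ v → G.dist r w < m := fun w hw hwv =>
    shortest_path_vertex_lt P hPl hw hwv
  have hQlt : ∀ w ∈ Q.support, w ≠ a → G.dist r w < m := fun w hw hwa =>
    hma ▸ shortest_path_vertex_lt Q hQl hw hwa
  -- the connecting path S : a → v
  set S : G.Walk a v := (Q.reverse.append P).bypass with hS
  have hSp : S.IsPath := Walk.bypass_isPath _
  have hSsup : ∀ w ∈ S.support, w ∈ Q.support ∨ w ∈ P.support := by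
    intro w hw
    have := Walk.support_bypass_subset _ hw
    rw [Walk.support_append] at this
    rcases List.mem_append.mp this with h | h
    · exact Or.inl (by rwa [Walk.support_reverse, List.mem_reverse] at h)
    · exact Or.inr (List.mem_of_mem_tail h)
  have hSedges : ∀ e ∈ S.edges, e ∈ Q.edges ∨ e ∈ P.edges := by
    intro e he
    have := Walk.edges_bypass_subset _ he
    rw [Walk.edges_append] at this
    rcases List.mem_append.mp this with h | h
    · exact Or.inl (by rwa [Walk.edges_reverse, List.mem_reverse] at h)
    · exact Or.inr h
  have hSed : ∀ x y : V, s(x, y) ∈ S.edges → G.dist r x < m ∨ G.dist r y < m := by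
    intro x y hxy
    rcases hSedges _ hxy with h | h
    · rcases shortest_path_edge_lt Q hQl (hma ▸ hmpos) h with h' | h'
      · exact Or.inl (hma ▸ h')
      · exact Or.inr (hma ▸ h')
    · exact shortest_path_edge_lt P hPl hmpos h
  have hSsd : ∀ w ∈ S.support, G.dist r w < m ∨ w = v ∨ w = a := by
    intro w hw
    rcases hSsup w hw with h | h
    · by_cases hwa : w = a
      · exact Or.inr (Or.inr hwa)
      · exact Or.inl (hQlt w h hwa)
    · by_cases hwv : w = v
      · exact Or.inr (Or.inl hwv)
      · exact Or.inl (hPlt w h hwv)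
  -- rotate the cycle at v
  set c₁ : G.Walk v v := c.rotate v hv with hc₁def
  have hc₁ : c₁.IsCycle := hc.rotate hv
  have hcrm : ∀ w : V, w ∈ c₁.support ↔ w ∈ c.support := fun w =>
    mem_support_rotate hv hc.not_nil
  have ha₁ : a ∈ c₁.support := (hcrm a).mpr ha
  have hcd : ∀ w ∈ c₁.support, m ≤ G.dist r w := fun w hw => hvmin w ((hcrm w).mp hw)
  have hced : ∀ e ∈ c₁.edges, ∀ x ∈ e, m ≤ G.dist r x := by
    intro e he x hx
    induction e with
    | h y z =>
      rcases Sym2.mem_iff.mp hx with rfl | rfl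
      · exact hcd _ (c₁.fst_mem_support_of_mem_edges he)
      · exact hcd _ (c₁.snd_mem_support_of_mem_edges he)
  have hdisj : ∀ e ∈ S.edges, e ∉ c₁.edges := by
    intro e he hec
    induction e with
    | h x y =>
      rcases hSed x y he with h | h
      · exact absurd (hced _ hec x (Sym2.mem_mk_left x y)) (by omega)
      · exact absurd (hced _ hec y (Sym2.mem_mk_right x y)) (by omega)
  -- q := arc of the cycle from v to a
  set q : G.Walk v a := c₁.takeUntil a ha₁ with hqdef
  have hspec := c₁.take_spec ha₁
  have hsupp_eq : q.support ++ (c₁.dropUntil a ha₁).support.tail = c₁.support := by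
    rw [← Walk.support_append, hspec]
  have htail_eq : q.support.tail ++ (c₁.dropUntil a ha₁).support.tail = c₁.support.tail := by
    have h1 : q.support = v :: q.support.tail := q.support_eq_cons
    have h2 : c₁.support = v :: c₁.support.tail := c₁.support_eq_cons
    rw [h1, h2, List.cons_append] at hsupp_eq
    exact List.tail_eq_of_cons_eq hsupp_eq
  have htnd : c₁.support.tail.Nodup := hc₁.support_nodup
  rw [← htail_eq, List.nodup_append] at htnd
  obtain ⟨hqtnd, hdnd, hdisj2⟩ := htnd
  have hvd : v ∈ (c₁.dropUntil a ha₁).support.tail := by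
    apply _root_.end_mem_tail_support
    intro hnil
    exact hne hnil.eq.symm
  have hvnq : v ∉ q.support.tail := fun hvq => hdisj2 v hvq v hvd rfl
  have hqnd : q.support.Nodup := by
    rw [q.support_eq_cons]
    exact List.nodup_cons.mpr ⟨hvnq, hqtnd⟩
  have hqpath : q.IsPath := Walk.IsPath.mk' hqnd
  -- D := q ++ S is a cycle
  set D : G.Walk v v := q.append S with hDdef
  have hqe : q.edges ⊆ c₁.edges := c₁.edges_takeUntil_subset ha₁
  have hDtrail : D.edges.Nodup := by
    rw [hDdef, Walk.edges_append, List.nodup_append]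
    exact ⟨hqpath.isTrail.edges_nodup, hSp.isTrail.edges_nodup,
      fun e heq _ heS hef => by subst hef; exact hdisj e heS (hqe heq)⟩
  have hDne : D ≠ Walk.nil := by
    intro h
    have hlen : D.length = 0 := by rw [h]; rfl
    rw [hDdef, Walk.length_append] at hlen
    have hq0 : q.length = 0 := by omega
    exact hne (Walk.eq_of_length_eq_zero hq0)
  have hSnd := hSp.support_nodup
  rw [S.support_eq_cons, List.nodup_cons] at hSnd
  have hDsupt : D.support.tail.Nodup := by
    have h1 : D.support = q.support ++ S.support.tail := Walk.support_append q S
    have h2 : D.support.tail = q.support.tail ++ S.support.tail := by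
      rw [h1, q.support_eq_cons]; rfl
    rw [h2, List.nodup_append]
    refine ⟨hqtnd, hSnd.2, ?_⟩
    intro x hxq y hxS hxy
    subst hxy
    have hxq' : x ∈ q.support := by
      rw [q.support_eq_cons]; exact List.mem_cons_of_mem _ hxq
    have hd : m ≤ G.dist r x := hcd x (c₁.support_takeUntil_subset ha₁ hxq')
    rcases hSsd x (List.mem_of_mem_tail hxS) with h | rfl | rfl
    · omega
    · exact hvnq hxq
    · exact hSnd.1 hxS
  have hDcyc : D.IsCycle := ⟨⟨⟨hDtrail⟩, hDne⟩, hDsupt⟩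
  obtain ⟨w1, hadj1, q', hq'⟩ := Walk.not_nil_iff.mp (Walk.not_nil_of_ne hne : ¬ q.Nil)
  have he1q : s(v, w1) ∈ q.edges := by rw [hq']; simp
  have he1D : s(v, w1) ∈ D.edges := by
    rw [hDdef, Walk.edges_append]; exact List.mem_append_left _ he1q
  have hcact := hG.2 c₁ D hc₁ hDcyc s(v, w1) (hqe he1q) he1D
  obtain ⟨w2, hadj2, S', hS'⟩ := Walk.not_nil_iff.mp (Walk.not_nil_of_ne (Ne.symm hne) : ¬ S.Nil)
  have he2S : s(a, w2) ∈ S.edges := by rw [hS']; simp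
  have he2D : s(a, w2) ∈ D.edges := by
    rw [hDdef, Walk.edges_append]; exact List.mem_append_right _ he2S
  exact hdisj _ he2S ((hcact _).mpr he2D)

lemma exists_edge_of_mem_support' {x : V} {c : G.Walk x x} (hnil : ¬ c.Nil) {w : V}
    (hw : w ∈ c.support) : ∃ e ∈ c.edges, w ∈ e := by
  obtain ⟨y, hadj, p, hp⟩ := Walk.not_nil_iff.mp (rotate_not_nil hw hnil)
  refine ⟨s(w, y), ?_, Sym2.mem_mk_left w y⟩
  have h : s(w, y) ∈ (c.rotate w hw).edges := by rw [hp]; simp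
  exact ((c.rotate_edges w hw).perm.mem_iff).mp h

end Aux

/-- In a rooted cactus graph, every simple cycle has exactly two edges incident to its
topmost vertex; these are exactly the edges of the cycle closest to the root, and every
edge belongs to at most one such associated pair. -/
theorem stmt2 {V : Type*} [DecidableEq V] (G : SimpleGraph V) (hG : IsCactus G) (r : V)
    {u : V} (c : G.Walk u u) (hc : c.IsCycle)
    (v : V) (hvc : v ∈ c.support) (hvtop : ∀ w ∈ c.support, G.dist r v ≤ G.dist r w) :
    (c.edges.toFinset.filter (fun e => v ∈ e)).card = 2 ∧
    (∀ e ∈ c.edges, (v ∈ e ↔ ∀ f ∈ c.edges, edgeDist G r e ≤ edgeDist G r f)) ∧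
    (∀ {u' : V} (d : G.Walk u' u'), d.IsCycle →
      ∀ v' ∈ d.support, (∀ w ∈ d.support, G.dist r v' ≤ G.dist r w) →
      (∃ e ∈ c.edges, v ∈ e ∧ e ∈ d.edges ∧ v' ∈ e) →
      c.edges.toFinset.filter (fun e => v ∈ e) =
        d.edges.toFinset.filter (fun e => v' ∈ e)) := by
  open SimpleGraph Walk in
  set m := G.dist r v with hm
  have hedgesup : ∀ f ∈ c.edges, ∀ x ∈ f, x ∈ c.support := fun f hf x hx =>
    mem_support_of_mem_edges' hf hx
  have hed_ge : ∀ f ∈ c.edges, m ≤ edgeDist G r f := by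
    intro f hf
    induction f with
    | h x y =>
      have hx := hvtop x (hedgesup _ hf x (Sym2.mem_mk_left x y))
      have hy := hvtop y (hedgesup _ hf y (Sym2.mem_mk_right x y))
      simpa [edgeDist] using le_min hx hy
  have hed_v : ∀ e ∈ c.edges, v ∈ e → edgeDist G r e = m := by
    intro e he hve
    induction e with
    | h x y =>
      have hx := hvtop x (hedgesup _ he x (Sym2.mem_mk_left x y))
      have hy := hvtop y (hedgesup _ he y (Sym2.mem_mk_right x y))
      rcases Sym2.mem_iff.mp hve with rfl | rfl
      · simp only [edgeDist, Sym2.lift_mk]; omega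
      · simp only [edgeDist, Sym2.lift_mk]; omega
  refine ⟨?_, ?_, ?_⟩
  · -- card = 2
    have hnd : c.edges.Nodup := hc.isCircuit.isTrail.edges_nodup
    have hfe : c.edges.toFinset.filter (fun e => v ∈ e) =
        (c.edges.filter (fun e => decide (v ∈ e))).toFinset := by
      ext f
      simp [List.mem_filter]
    rw [hfe, List.toFinset_card_of_nodup (hnd.filter _), ← List.countP_eq_length_filter]
    exact cycle_countP c hc hvc
  · -- topmost edges are exactly the closest edges
    intro e he
    constructor
    · intro hve f hf
      rw [hed_v e he hve]
      exact hed_ge f hf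
    · intro hmin
      obtain ⟨f₀, hf₀, hvf₀⟩ := exists_edge_of_mem_support' hc.not_nil hvc
      have hle : edgeDist G r e ≤ m := (hmin f₀ hf₀).trans_eq (hed_v f₀ hf₀ hvf₀)
      induction e with
      | h x y =>
        have hx := hvtop x (hedgesup _ he x (Sym2.mem_mk_left x y))
        have hy := hvtop y (hedgesup _ he y (Sym2.mem_mk_right x y))
        have hxy : G.dist r x = m ∨ G.dist r y = m := by
          simp only [edgeDist, Sym2.lift_mk] at hle
          omega
        rcases hxy with hx' | hy'
        · have : v = x := topmost_unique hG r c hc hvc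
            (hedgesup _ he x (Sym2.mem_mk_left x y)) hvtop
            (fun w hw => hx' ▸ hvtop w hw)
          rw [this]
          exact Sym2.mem_mk_left x y
        · have : v = y := topmost_unique hG r c hc hvc
            (hedgesup _ he y (Sym2.mem_mk_right x y)) hvtop
            (fun w hw => hy' ▸ hvtop w hw)
          rw [this]
          exact Sym2.mem_mk_right x y
  · -- uniqueness of associated pairs
    rintro u' d hd v' hv'd hv'top ⟨e, hec, hve, hed, hv'e⟩
    have hiff := hG.2 c d hc hd e hec hed
    have htf : c.edges.toFinset = d.edges.toFinset := by
      ext f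
      simp only [List.mem_toFinset]
      exact hiff f
    have hv'c : v' ∈ c.support := mem_support_of_mem_edges' hec hv'e
    have hsub : ∀ w, w ∈ c.support → w ∈ d.support := by
      intro w hw
      obtain ⟨f, hf, hwf⟩ := exists_edge_of_mem_support' hc.not_nil hw
      exact mem_support_of_mem_edges' ((hiff f).mp hf) hwf
    have hv'min : ∀ w ∈ c.support, G.dist r v' ≤ G.dist r w := fun w hw =>
      hv'top w (hsub w hw)
    have hveq : v = v' := topmost_unique hG r c hc hvc hv'c hvtop hv'min
    rw [htf, hveq]
end

section
/- Let G be a cactus graph with skeleton SK defined by a set of border vertices. Then every connected component of G minus the edges of SK contains exactly one skeleton vertex, provided it contains at least one vertex adjacent to SK. -/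
def Skeleton {V : Type*} (G : SimpleGraph V) (W : Set V) : Set (Sym2 V) :=
  {e | ∃ u v, u ∈ W ∧ v ∈ W ∧ u ≠ v ∧ ∃ p : G.Walk u v, p.IsPath ∧ e ∈ p.edges}

def SkeletonVertex {V : Type*} (G : SimpleGraph V) (W : Set V) (x : V) : Prop :=
  ∃ e ∈ Skeleton G W, x ∈ e

open SimpleGraph Walk

section Helpers

variable {V : Type*} {G : SimpleGraph V}



/-- Split a walk at the first vertex satisfying `P`, given that some vertex satisfies `P`. -/
lemma exists_first_split (P : V → Prop) :
    ∀ {w y : V} (m : G.Walk w y) (t : V), t ∈ m.support → P t →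
    ∃ (c : V) (m₁ : G.Walk w c) (m₂ : G.Walk c y), m = m₁.append m₂ ∧ P c ∧
      ∀ v ∈ m₁.support, P v → v = c := by
  intro w y m
  induction m with
  | nil =>
    intro t ht hP
    simp only [support_nil, List.mem_singleton] at ht
    subst ht
    exact ⟨t, .nil, .nil, rfl, hP, by simp⟩
  | @cons a b c h q ih =>
    intro t ht hP
    by_cases ha : P a
    · exact ⟨a, .nil, .cons h q, rfl, ha, by simp⟩
    · have ht' : t ∈ q.support := by
        rcases (by simpa using ht : t = a ∨ t ∈ q.support) with rfl | h'
        · exact absurd hP ha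
        · exact h'
      obtain ⟨c', m₁, m₂, heq, hc', hfirst⟩ := ih t ht' hP
      refine ⟨c', .cons h m₁, m₂, by rw [cons_append, heq], hc', ?_⟩
      intro v hv hPv
      rcases (by simpa using hv : v = a ∨ v ∈ m₁.support) with rfl | h'
      · exact absurd hPv ha
      · exact hfirst v h' hPv

/-- Append of two paths meeting only at the junction is a path. -/
lemma isPath_append_of_inter {u x v : V} {p : G.Walk u x} {q : G.Walk x v}
    (hp : p.IsPath) (hq : q.IsPath)
    (hint : ∀ z, z ∈ p.support → z ∈ q.support → z = x) : (p.append q).IsPath := by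
  apply IsPath.mk'
  rw [support_append]
  refine List.Nodup.append hp.support_nodup (hq.support_nodup.sublist (List.tail_sublist _)) ?_
  intro a hap haq
  have haq' : a ∈ q.support := List.mem_of_mem_tail haq
  have : a = x := hint a hap haq'
  subst this
  have : ¬ a ∈ q.support.tail := by
    have := hq.support_nodup
    rw [q.support_eq_cons] at this
    exact (List.nodup_cons.mp this).1
  exact this haq

/-- A cycle built from two internally-disjoint, edge-disjoint paths. -/
lemma isCycle_append_reverse {a b : V} {p r : G.Walk a b} (hab : a ≠ b)
    (hp : p.IsPath) (hr : r.IsPath)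
    (hedge : ∀ e ∈ p.edges, e ∉ r.edges)
    (hsup : ∀ z, z ∈ p.support → z ∈ r.support → z = a ∨ z = b) :
    (p.append r.reverse).IsCycle := by
  refine ⟨⟨⟨?_⟩, ?_⟩, ?_⟩
  · -- trail
    rw [edges_append, edges_reverse]
    refine List.Nodup.append hp.isTrail.edges_nodup (by rw [List.nodup_reverse]; exact hr.isTrail.edges_nodup) ?_
    intro e hep her
    exact hedge e hep (List.mem_reverse.mp her)
  · -- ≠ nil
    intro hnil
    have : (p.append r.reverse).length = 0 := by rw [hnil]; rfl
    rw [length_append] at this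
    exact hab (eq_of_length_eq_zero (Nat.eq_zero_of_add_eq_zero_right this))
  · -- support.tail nodup
    rw [support_append]
    have hps : p.support = a :: p.support.tail := p.support_eq_cons
    rw [hps]
    simp only [List.cons_append, List.tail_cons]
    have h1 : p.support.tail.Nodup := by
      have := hp.support_nodup; rw [hps] at this; exact (List.nodup_cons.mp this).2
    have h2 : r.reverse.support.tail.Nodup := by
      have := hr.reverse.support_nodup
      rw [r.reverse.support_eq_cons] at this
      exact (List.nodup_cons.mp this).2
    refine List.Nodup.append h1 h2 ?_
    intro z hzp hzr
    have hzp' : z ∈ p.support := by rw [hps]; exact List.mem_cons_of_mem _ hzp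
    have hzr' : z ∈ r.support := by
      have : z ∈ r.reverse.support := List.mem_of_mem_tail hzr
      rwa [support_reverse, List.mem_reverse] at this
    rcases hsup z hzp' hzr' with rfl | rfl
    · -- z = a, but a ∉ p.support.tail
      have := hp.support_nodup; rw [hps] at this
      exact (List.nodup_cons.mp this).1 hzp
    · -- z = b, but b ∉ r.reverse.support.tail
      have := hr.reverse.support_nodup
      rw [r.reverse.support_eq_cons] at this
      exact (List.nodup_cons.mp this).1 hzr

lemma mem_tail_support_of_closed {w v : V} {C : G.Walk w w} (hC : C ≠ nil)
    (hv : v ∈ C.support) : v ∈ C.support.tail := by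
  cases C with
  | nil => exact absurd rfl hC
  | cons h q =>
    simp only [support_cons, List.tail_cons]
    rcases (by simpa using hv : v = w ∨ v ∈ q.support) with rfl | h'
    · exact q.end_mem_support
    · exact h'

lemma mem_tail_support_of_ne {u v z : V} {p : G.Walk u v} (hz : z ∈ p.support)
    (hne : z ≠ u) : z ∈ p.support.tail := by
  rw [p.support_eq_cons] at hz
  rcases hz with _ | hz
  · exact absurd rfl hne
  · assumption

/-- The two arcs of a cycle between two of its vertices. -/
lemma cycle_arcs {w x y : V} {C : G.Walk w w} (hC : C.IsCycle)
    (hx : x ∈ C.support) (hy : y ∈ C.support) (hxy : x ≠ y) :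
    ∃ (A B : G.Walk x y), A.IsPath ∧ B.IsPath ∧
      (∀ z ∈ A.support, z ∈ C.support) ∧ (∀ z ∈ B.support, z ∈ C.support) ∧
      (∀ e ∈ A.edges, e ∈ C.edges) ∧ (∀ e ∈ B.edges, e ∈ C.edges) ∧
      (∀ e ∈ C.edges, e ∈ A.edges ∨ e ∈ B.edges) := by
  classical
  set C₁ := C.rotate x hx with hC₁def
  have hC₁ : C₁.IsCycle := (isCycle_rotate hx).mpr hC
  have htail : ∀ z, z ∈ C₁.support.tail ↔ z ∈ C.support.tail := fun z =>
    ⟨fun h => (support_rotate C x hx).mem_iff.mp h, fun h => (support_rotate C x hx).mem_iff.mpr h⟩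
  have hCsub : ∀ z ∈ C₁.support, z ∈ C.support := by
    intro z hz
    rw [C₁.support_eq_cons] at hz
    rcases hz with _ | hz
    · exact hx
    · exact List.mem_of_mem_tail ((htail z).mp (by assumption))
  have hy₁ : y ∈ C₁.support := by
    rw [C₁.support_eq_cons]
    exact List.mem_cons_of_mem _ ((htail y).mpr (mem_tail_support_of_closed hC.ne_nil hy))
  have hedgesperm : ∀ e, e ∈ C₁.edges ↔ e ∈ C.edges := fun e =>
    ⟨fun h => (rotate_edges C x hx).mem_iff.mp h, fun h => (rotate_edges C x hx).mem_iff.mpr h⟩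
  set A := C₁.takeUntil y hy₁ with hA
  set D := C₁.dropUntil y hy₁ with hD
  have hspec : A.append D = C₁ := C₁.take_spec hy₁
  have hsupp : C₁.support = A.support ++ D.support.tail := by
    rw [← hspec, support_append]
  have hAcons : A.support = x :: A.support.tail := A.support_eq_cons
  have htailsplit : C₁.support.tail = A.support.tail ++ D.support.tail := by
    rw [hsupp, hAcons]; rfl
  have hnodup : (A.support.tail ++ D.support.tail).Nodup := by
    rw [← htailsplit]; exact hC₁.support_nodup
  have hAnodup := (List.nodup_append'.mp hnodup).1
  have hDnodup := (List.nodup_append'.mp hnodup).2.1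
  have hdisj := (List.nodup_append'.mp hnodup).2.2
  have hxD : x ∈ D.support.tail :=
    mem_tail_support_of_ne D.end_mem_support (hxy)
  have hyA : y ∈ A.support.tail :=
    mem_tail_support_of_ne A.end_mem_support (hxy.symm)
  have hApath : A.IsPath := by
    apply IsPath.mk'
    rw [hAcons]
    exact List.nodup_cons.mpr ⟨fun hxA => hdisj hxA hxD, hAnodup⟩
  have hDpath : D.IsPath := by
    apply IsPath.mk'
    rw [D.support_eq_cons]
    exact List.nodup_cons.mpr ⟨fun hyD => hdisj hyA hyD, hDnodup⟩
  have hAsub : ∀ z ∈ A.support, z ∈ C.support := fun z hz =>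
    hCsub z (C₁.support_takeUntil_subset hy₁ hz)
  have hBsub : ∀ z ∈ D.reverse.support, z ∈ C.support := by
    intro z hz
    rw [support_reverse, List.mem_reverse] at hz
    exact hCsub z (C₁.support_dropUntil_subset hy₁ hz)
  have hAe : ∀ e ∈ A.edges, e ∈ C.edges := fun e he =>
    (hedgesperm e).mp (C₁.edges_takeUntil_subset hy₁ he)
  have hBe : ∀ e ∈ D.reverse.edges, e ∈ C.edges := by
    intro e he
    rw [edges_reverse, List.mem_reverse] at he
    exact (hedgesperm e).mp (C₁.edges_dropUntil_subset hy₁ he)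
  refine ⟨A, D.reverse, hApath, hDpath.reverse, hAsub, hBsub, hAe, hBe, ?_⟩
  intro e he
  have : e ∈ C₁.edges := (hedgesperm e).mpr he
  rw [← hspec, edges_append, List.mem_append] at this
  rcases this with h | h
  · exact Or.inl h
  · exact Or.inr (by rw [edges_reverse, List.mem_reverse]; exact h)
/-- In a cactus, there is no path between two distinct vertices of a cycle avoiding all
cycle edges and touching the cycle only at its endpoints. -/
lemma cactus_no_detour
    (hG2 : ∀ {u v : V} (c : G.Walk u u) (d : G.Walk v v), c.IsCycle → d.IsCycle →
      ∀ e, e ∈ c.edges → e ∈ d.edges → ∀ f, (f ∈ c.edges ↔ f ∈ d.edges))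
    {w c c' : V} {C : G.Walk w w} (hC : C.IsCycle) {d : G.Walk c c'} (hd : d.IsPath)
    (hcc' : c ≠ c') (hcs : c ∈ C.support) (hc's : c' ∈ C.support)
    (hde : ∀ e ∈ d.edges, e ∉ C.edges)
    (hds : ∀ z ∈ d.support, z ∈ C.support → z = c ∨ z = c') : False := by
  obtain ⟨A, B, hApath, _, hAsub, _, hAe, _, _⟩ := cycle_arcs hC hcs hc's hcc'
  have hY : (d.append A.reverse).IsCycle := by
    refine isCycle_append_reverse hcc' hd hApath ?_ ?_
    · exact fun e he heA => hde e he (hAe e heA)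
    · exact fun z hzd hzA => hds z hzd (hAsub z hzA)
  -- A has an edge, which is in C
  have hAnonnil : A.edges ≠ [] := by
    intro h
    have : A.length = 0 := by rw [← length_edges, h]; rfl
    exact hcc' (eq_of_length_eq_zero this)
  obtain ⟨e₀, he₀⟩ := List.exists_mem_of_ne_nil _ hAnonnil
  have he₀Y : e₀ ∈ (d.append A.reverse).edges := by
    rw [edges_append, List.mem_append, edges_reverse, List.mem_reverse]
    exact Or.inr he₀
  have key := hG2 (d.append A.reverse) C hY hC e₀ he₀Y (hAe e₀ he₀)
  -- d has an edge, which is then in C, contradiction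
  have hdnonnil : d.edges ≠ [] := by
    intro h
    have : d.length = 0 := by rw [← length_edges, h]; rfl
    exact hcc' (eq_of_length_eq_zero this)
  obtain ⟨e₁, he₁⟩ := List.exists_mem_of_ne_nil _ hdnonnil
  have he₁Y : e₁ ∈ (d.append A.reverse).edges := by
    rw [edges_append, List.mem_append]; exact Or.inl he₁
  exact hde e₁ he₁ ((key e₁).mp he₁Y)

/-- In a cactus, a path between two vertices of a cycle stays on the cycle. -/
lemma path_in_cycle
    (hG2 : ∀ {u v : V} (c : G.Walk u u) (d : G.Walk v v), c.IsCycle → d.IsCycle →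
      ∀ e, e ∈ c.edges → e ∈ d.edges → ∀ f, (f ∈ c.edges ↔ f ∈ d.edges))
    {w : V} {C : G.Walk w w} (hC : C.IsCycle) {x y : V} (m : G.Walk x y) :
    m.IsPath → x ∈ C.support → y ∈ C.support →
      (∀ z ∈ m.support, z ∈ C.support) ∧ (∀ e ∈ m.edges, e ∈ C.edges) := by
  induction m with
  | nil =>
    intro _ hx _
    refine ⟨?_, by simp⟩
    intro z hz
    simp only [support_nil, List.mem_singleton] at hz
    subst hz; exact hx
  | @cons a b y' h q ih =>
    intro hm hx hy
    by_cases hb : b ∈ C.support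
    · have hedge : s(a, b) ∈ C.edges := by
        by_contra hne
        have hsingle : (Walk.cons h (Walk.nil' b) : G.Walk a b).IsPath := by
          apply IsPath.mk'
          simp [h.ne]
        refine cactus_no_detour hG2 hC hsingle h.ne hx hb ?_ ?_
        · intro e he
          simp only [edges_cons, edges_nil, List.mem_singleton] at he
          subst he; exact hne
        · intro z hz _
          simp only [support_cons, support_nil, List.mem_cons, List.mem_singleton,
            List.not_mem_nil, or_false] at hz
          exact hz
      obtain ⟨hsub, hesub⟩ := ih hm.of_cons hb hy
      constructor
      · intro z hz
        rcases (by simpa using hz : z = a ∨ z ∈ q.support) with rfl | h'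
        · exact hx
        · exact hsub z h'
      · intro e he
        rcases (by simpa using he : e = s(a, b) ∨ e ∈ q.edges) with rfl | h'
        · exact hedge
        · exact hesub e h'
    · exfalso
      obtain ⟨c', m₁, m₂, heq, hc', hfirst⟩ :=
        exists_first_split (· ∈ C.support) q y' q.end_mem_support hy
      have hdm : (Walk.cons h m₁).append m₂ = Walk.cons h q := by rw [cons_append, heq]
      have hd : (Walk.cons h m₁).IsPath := by
        exact IsPath.of_append_left (q := m₂) (by rw [hdm]; exact hm)
      have hac' : a ≠ c' := by
        intro hzz
        have hc'q : c' ∈ q.support := by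
          rw [heq, mem_support_append_iff]
          exact Or.inl m₁.end_mem_support
        have := hm.support_nodup
        rw [support_cons] at this
        exact (List.nodup_cons.mp this).1 (hzz ▸ hc'q)
      refine cactus_no_detour hG2 hC hd hac' hx hc' ?_ ?_
      · intro e he heC
        rcases (by simpa using he : e = s(a, b) ∨ e ∈ m₁.edges) with rfl | h'
        · exact hb (C.snd_mem_support_of_mem_edges heC)
        · induction e using Sym2.ind with
          | _ u₁ v₁ =>
            have hu₁ : u₁ ∈ m₁.support := m₁.fst_mem_support_of_mem_edges h'
            have hv₁ : v₁ ∈ m₁.support := m₁.snd_mem_support_of_mem_edges h'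
            have hu₁c : u₁ = c' := hfirst u₁ hu₁ (C.fst_mem_support_of_mem_edges heC)
            have hv₁c : v₁ = c' := hfirst v₁ hv₁ (C.snd_mem_support_of_mem_edges heC)
            have := C.edges_subset_edgeSet heC
            rw [hu₁c, hv₁c] at this
            exact G.not_isDiag_of_mem_edgeSet this (Sym2.mk_isDiag_iff.mpr rfl)
      · intro z hz hzC
        rcases (by simpa using hz : z = a ∨ z ∈ m₁.support) with rfl | h'
        · exact Or.inl rfl
        · exact Or.inr (hfirst z h' hzC)
/-- In a cactus, if a path contains an edge of a cycle, then for any edge `g` of the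
cycle there is a path with the same endpoints containing `g`. -/
lemma switch_path
    (hG2 : ∀ {u v : V} (c : G.Walk u u) (d : G.Walk v v), c.IsCycle → d.IsCycle →
      ∀ e, e ∈ c.edges → e ∈ d.edges → ∀ f, (f ∈ c.edges ↔ f ∈ d.edges))
    {u v w : V} {p : G.Walk u v} (hp : p.IsPath) {C : G.Walk w w} (hC : C.IsCycle)
    {f g : Sym2 V} (hfp : f ∈ p.edges) (hfC : f ∈ C.edges) (hg : g ∈ C.edges) :
    ∃ P : G.Walk u v, P.IsPath ∧ g ∈ P.edges := by
  induction f using Sym2.ind with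
  | _ fa fb =>
  have hfaC : fa ∈ C.support := C.fst_mem_support_of_mem_edges hfC
  have hfbC : fb ∈ C.support := C.snd_mem_support_of_mem_edges hfC
  have hfap : fa ∈ p.support := p.fst_mem_support_of_mem_edges hfp
  -- split p at the first vertex on C
  obtain ⟨x, pre, rest, hsplit, hxC, hprefirst⟩ :=
    exists_first_split (· ∈ C.support) p fa hfap hfaC
  -- split rest at the last vertex on C (via reverse)
  have hfar : fa ∈ rest.support ∨ fa ∈ pre.support := by
    rw [hsplit, mem_support_append_iff] at hfap
    exact hfap.symm
  have hxrev : x ∈ rest.reverse.support := by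
    rw [support_reverse, List.mem_reverse]; exact rest.start_mem_support
  obtain ⟨y, suf', mid', hsplit', hyC, hsuffirst⟩ :=
    exists_first_split (· ∈ C.support) rest.reverse x hxrev hxC
  have hrest : rest = mid'.reverse.append suf'.reverse := by
    have := congrArg Walk.reverse hsplit'
    rwa [reverse_reverse, reverse_append] at this
  set mid := mid'.reverse with hmid
  set suf := suf'.reverse with hsuf
  have hp' : p = pre.append (mid.append suf) := by rw [hsplit, hrest]
  have hprepath : pre.IsPath := IsPath.of_append_left (q := mid.append suf) (by rw [← hp']; exact hp)
  have hrestpath : (mid.append suf).IsPath :=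
    IsPath.of_append_right (p := pre) (by rw [← hp']; exact hp)
  have hmidpath : mid.IsPath := IsPath.of_append_left (q := suf) hrestpath
  have hsufpath : suf.IsPath := IsPath.of_append_right (p := mid) hrestpath
  have hsufmem : ∀ z ∈ suf.support, z ∈ C.support → z = y := by
    intro z hz
    rw [hsuf, support_reverse, List.mem_reverse] at hz
    exact hsuffirst z hz
  -- f is an edge of mid
  have hnotdiag : ∀ e ∈ C.edges, ¬ e.IsDiag := fun e he =>
    G.not_isDiag_of_mem_edgeSet (C.edges_subset_edgeSet he)
  have hfpre : s(fa, fb) ∉ pre.edges := by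
    intro hmem
    have h1 := hprefirst fa (pre.fst_mem_support_of_mem_edges hmem) hfaC
    have h2 := hprefirst fb (pre.snd_mem_support_of_mem_edges hmem) hfbC
    exact hnotdiag _ hfC (by rw [h1, h2]; exact Sym2.mk_isDiag_iff.mpr rfl)
  have hfsuf : s(fa, fb) ∉ suf.edges := by
    intro hmem
    have h1 := hsufmem fa (suf.fst_mem_support_of_mem_edges hmem) hfaC
    have h2 := hsufmem fb (suf.snd_mem_support_of_mem_edges hmem) hfbC
    exact hnotdiag _ hfC (by rw [h1, h2]; exact Sym2.mk_isDiag_iff.mpr rfl)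
  have hfmid : s(fa, fb) ∈ mid.edges := by
    have : s(fa, fb) ∈ p.edges := hfp
    rw [hp', edges_append, edges_append, List.mem_append, List.mem_append] at this
    rcases this with h1 | h2
    · exact absurd h1 hfpre
    rcases h2 with h2 | h3
    · exact h2
    · exact absurd h3 hfsuf
  have hxy : x ≠ y := by
    intro hzz
    subst hzz
    have : mid = Walk.nil := isPath_iff_eq_nil.mp hmidpath
    rw [this] at hfmid
    simp at hfmid
  -- mid stays on the cycle
  obtain ⟨hmidsub, hmidesub⟩ := path_in_cycle hG2 hC mid hmidpath hxC hyC
  by_cases hgmid : g ∈ mid.edges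
  · refine ⟨p, hp, ?_⟩
    rw [hp', edges_append, edges_append, List.mem_append, List.mem_append]
    exact Or.inr (Or.inl hgmid)
  -- otherwise pick the arc of C through g
  obtain ⟨A, B, hApath, hBpath, hAsub, hBsub, hAe, hBe, hcover⟩ := cycle_arcs hC hxC hyC hxy
  -- pre and suf are disjoint
  have hpresuf : ∀ z ∈ pre.support, z ∈ suf.support → False := by
    intro z hzpre hzsuf
    rcases (by rw [suf.support_eq_cons] at hzsuf; exact List.mem_cons.mp hzsuf :
        z = y ∨ z ∈ suf.support.tail) with rfl | hzt
    · exact hxy ((hprefirst z hzpre hyC).symm)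
    · have hnd := hp.support_nodup
      rw [hp', support_append] at hnd
      have hdisj := (List.nodup_append'.mp hnd).2.2
      refine hdisj hzpre ?_
      have hms : (mid.append suf).support = mid.support ++ suf.support.tail :=
        support_append mid suf
      rw [hms, mid.support_eq_cons]
      exact List.mem_append_right _ hzt
  have build : ∀ (Arc : G.Walk x y), Arc.IsPath → (∀ z ∈ Arc.support, z ∈ C.support) →
      g ∈ Arc.edges → ∃ P : G.Walk u v, P.IsPath ∧ g ∈ P.edges := by
    intro Arc hArcpath hArcsub hgArc
    have hinner : (Arc.append suf).IsPath := by
      refine isPath_append_of_inter hArcpath hsufpath ?_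
      intro z hz1 hz2
      exact hsufmem z hz2 (hArcsub z hz1)
    have houter : (pre.append (Arc.append suf)).IsPath := by
      refine isPath_append_of_inter hprepath hinner ?_
      intro z hz1 hz2
      rw [mem_support_append_iff] at hz2
      rcases hz2 with hz2 | hz2
      · exact hprefirst z hz1 (hArcsub z hz2)
      · exact absurd hz2 (fun h => hpresuf z hz1 h)
    refine ⟨pre.append (Arc.append suf), houter, ?_⟩
    rw [edges_append, edges_append, List.mem_append, List.mem_append]
    exact Or.inr (Or.inl hgArc)
  obtain hgA | hgB := hcover g hg
  · exact build A hApath hAsub hgA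
  · exact build B hBpath hBsub hgB

lemma skeletonVertex_reach {V : Type*} {G : SimpleGraph V} {W : Set V} {z : V}
    (h : SkeletonVertex G W z) :
    ∃ w ∈ W, ∃ r : G.Walk z w, ∀ e ∈ r.edges, e ∈ Skeleton G W := by
  classical
  obtain ⟨e, he, hze⟩ := h
  obtain ⟨u, v, hu, hv, huv, pth, hpath, hep⟩ := he
  obtain ⟨z', rfl⟩ := Sym2.mem_iff_exists.mp hze
  have hz : z ∈ pth.support := pth.fst_mem_support_of_mem_edges hep
  refine ⟨u, hu, (pth.takeUntil z hz).reverse, ?_⟩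
  intro e' he'
  rw [edges_reverse, List.mem_reverse] at he'
  exact ⟨u, v, hu, hv, huv, pth, hpath, pth.edges_takeUntil_subset hz he'⟩

lemma no_two_skeleton_path {V : Type*} {G : SimpleGraph V} (hG : IsCactus G) {W : Set V} :
    ∀ n : ℕ, ∀ {z₁ z₂ : V} (q s : G.Walk z₁ z₂), q.length ≤ n → z₁ ≠ z₂ →
      q.IsPath → s.IsPath →
      (∀ e ∈ q.edges, e ∉ Skeleton G W) → (∀ e ∈ s.edges, e ∈ Skeleton G W) → False := by
  classical
  intro n
  induction n with
  | zero =>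
    intro z₁ z₂ q s hlen hne _ _ _ _
    exact hne (eq_of_length_eq_zero (Nat.le_zero.mp hlen))
  | succ n ih =>
    intro z₁ z₂ q s hlen hne hq hs hqe hse
    by_cases hex : ∃ t, t ∈ q.support ∧ t ∈ s.support ∧ t ≠ z₁ ∧ t ≠ z₂
    · obtain ⟨t, htq, hts, htz₁, htz₂⟩ := hex
      have hdroplen : (q.dropUntil t htq).length ≠ 0 := fun h => htz₂ (eq_of_length_eq_zero h)
      have hlen' : (q.takeUntil t htq).length ≤ n := by
        have := congrArg Walk.length (q.take_spec htq)
        rw [length_append] at this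
        omega
      refine ih (q.takeUntil t htq) (s.takeUntil t hts) hlen' (fun h => htz₁ h.symm)
        (hq.takeUntil htq) (hs.takeUntil hts) ?_ ?_
      · exact fun e he => hqe e (q.edges_takeUntil_subset htq he)
      · exact fun e he => hse e (s.edges_takeUntil_subset hts he)
    · push_neg at hex
      have hY : (q.append s.reverse).IsCycle := by
        refine isCycle_append_reverse hne hq hs ?_ ?_
        · exact fun e he hes => hqe e he (hse e hes)
        · intro z hz1 hz2
          by_contra hcon
          push_neg at hcon
          exact hcon.2 (hex z hz1 hz2 hcon.1)
      have hsnn : s.edges ≠ [] := fun h =>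
        hne (eq_of_length_eq_zero (by rw [← length_edges, h]; rfl))
      obtain ⟨f, hf⟩ := List.exists_mem_of_ne_nil _ hsnn
      have hqnn : q.edges ≠ [] := fun h =>
        hne (eq_of_length_eq_zero (by rw [← length_edges, h]; rfl))
      obtain ⟨g, hgq⟩ := List.exists_mem_of_ne_nil _ hqnn
      obtain ⟨u, v, hu, hv, huv, pth, hpth, hfp⟩ := hse f hf
      have hfY : f ∈ (q.append s.reverse).edges := by
        rw [edges_append, List.mem_append, edges_reverse, List.mem_reverse]
        exact Or.inr hf
      have hgY : g ∈ (q.append s.reverse).edges := by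
        rw [edges_append, List.mem_append]; exact Or.inl hgq
      obtain ⟨P, hP, hgP⟩ := switch_path hG.2 hpth hY hfp hfY hgY
      exact hqe g hgq ⟨u, v, hu, hv, huv, P, hP, hgP⟩


end Helpers

/-- Every connected component of `G` minus the skeleton edges that touches the skeleton
(contains a vertex equal or adjacent to a skeleton vertex) contains exactly one
skeleton vertex. -/
theorem stmt4 {V : Type*} (G : SimpleGraph V) (hG : IsCactus G)
    (W : Set V) (hWfin : W.Finite) (hW : 2 ≤ W.ncard)
    (K : (G.deleteEdges (Skeleton G W)).ConnectedComponent)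
    (htouch : ∃ x y, (G.deleteEdges (Skeleton G W)).connectedComponentMk x = K ∧
      SkeletonVertex G W y ∧ (x = y ∨ G.Adj x y)) :
    ∃! z : V, (G.deleteEdges (Skeleton G W)).connectedComponentMk z = K ∧
      SkeletonVertex G W z := by
  classical
  obtain ⟨x, y, hxK, hySk, hxy⟩ := htouch
  -- existence
  have hex : ∃ z₀, (G.deleteEdges (Skeleton G W)).connectedComponentMk z₀ = K ∧
      SkeletonVertex G W z₀ := by
    rcases hxy with rfl | hadj
    · exact ⟨x, hxK, hySk⟩
    · by_cases hmem : s(x, y) ∈ Skeleton G W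
      · exact ⟨x, hxK, ⟨s(x, y), hmem, Sym2.mem_mk_left x y⟩⟩
      · refine ⟨y, ?_, hySk⟩
        have hadj' : (G.deleteEdges (Skeleton G W)).Adj y x :=
          SimpleGraph.deleteEdges_adj.mpr ⟨hadj.symm, by rwa [Sym2.eq_swap]⟩
        exact (SimpleGraph.ConnectedComponent.connectedComponentMk_eq_of_adj hadj').trans hxK
  obtain ⟨z₀, hz₀K, hz₀Sk⟩ := hex
  refine ⟨z₀, ⟨hz₀K, hz₀Sk⟩, ?_⟩
  rintro z ⟨hzK, hzSk⟩
  by_contra hne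
  -- a path from z to z₀ avoiding skeleton edges
  have hreach : (G.deleteEdges (Skeleton G W)).Reachable z z₀ :=
    SimpleGraph.ConnectedComponent.exact (hzK.trans hz₀K.symm)
  obtain ⟨W'⟩ := hreach
  have hWsub : ∀ e ∈ W'.edges, e ∈ G.edgeSet := by
    intro e he
    have := W'.edges_subset_edgeSet he
    rw [SimpleGraph.edgeSet_deleteEdges] at this
    exact this.1
  have hWnsk : ∀ e ∈ W'.edges, e ∉ Skeleton G W := by
    intro e he
    have := W'.edges_subset_edgeSet he
    rw [SimpleGraph.edgeSet_deleteEdges] at this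
    exact this.2
  set q₀ := W'.transfer G hWsub with hq₀
  have hq₀e : q₀.edges = W'.edges := W'.edges_transfer hWsub
  set q := q₀.bypass with hqdef
  have hqpath : q.IsPath := q₀.bypass_isPath
  have hqe : ∀ e ∈ q.edges, e ∉ Skeleton G W := by
    intro e he
    exact hWnsk e (by rw [← hq₀e]; exact q₀.edges_bypass_subset he)
  -- a path from z to z₀ using only skeleton edges
  obtain ⟨w₁, hw₁, r₁, hr₁⟩ := skeletonVertex_reach hzSk
  obtain ⟨w₂, hw₂, r₂, hr₂⟩ := skeletonVertex_reach hz₀Sk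
  have hmid : ∃ m : G.Walk w₁ w₂, ∀ e ∈ m.edges, e ∈ Skeleton G W := by
    by_cases hww : w₁ = w₂
    · subst hww; exact ⟨Walk.nil, by simp⟩
    · obtain ⟨wk⟩ := hG.1.preconnected w₁ w₂
      refine ⟨wk.bypass, ?_⟩
      intro e he
      exact ⟨w₁, w₂, hw₁, hw₂, hww, wk.bypass, wk.bypass_isPath, he⟩
  obtain ⟨m, hm⟩ := hmid
  set s₀ : G.Walk z z₀ := r₁.append (m.append r₂.reverse) with hs₀
  have hs₀e : ∀ e ∈ s₀.edges, e ∈ Skeleton G W := by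
    intro e he
    rw [hs₀, edges_append, List.mem_append, edges_append, List.mem_append,
      edges_reverse, List.mem_reverse] at he
    rcases he with h | h | h
    · exact hr₁ e h
    · exact hm e h
    · exact hr₂ e h
  exact no_two_skeleton_path hG q.length q s₀.bypass le_rfl hne hqpath s₀.bypass_isPath hqe
    (fun e he => hs₀e e (s₀.edges_bypass_subset he))
end

section
/- For a rooted instance of the tollbooth problem on a graph (buyers each wanting a cheapest path from the root r to a destination vertex, buying iff the distance is at most their budget and paying the distance), there exists a revenue-maximizing nonnegative price assignment under which the distance from every vertex to the root lies in the set {0} ∪ {b_i : i a buyer}. -/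
/-- Shortest-path distance from `r` to `v` under nonnegative edge prices `p`. -/
noncomputable def pdist {V : Type*} (H : SimpleGraph V) (p : Sym2 V → ℝ) (r v : V) : ℝ :=
  sInf {c : ℝ | ∃ q : H.Walk r v, q.IsPath ∧ c = (q.edges.map p).sum}

/-- Revenue of a price assignment: each buyer `i` buys a cheapest path from the root to
her destination `t i` iff its cost is at most her budget `b i`, paying that cost. -/
noncomputable def revenue {V : Type*} (H : SimpleGraph V) (r : V)
    {ι : Type*} [Fintype ι] (t : ι → V) (b : ι → ℝ) (p : Sym2 V → ℝ) : ℝ :=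
  ∑ i : ι, if pdist H p r (t i) ≤ b i then pdist H p r (t i) else 0

namespace Tollbooth

open SimpleGraph

set_option linter.unusedSectionVars false

/-! ### Rounding up to a finite set of values -/

/-- Round `x` up to the least element of `sB` that is at least `x`,
or to the maximum of `sB` if there is none. -/
noncomputable def roundUp (sB : Finset ℝ) (hne : sB.Nonempty) (x : ℝ) : ℝ :=
  if h : (sB.filter (fun s => x ≤ s)).Nonempty then (sB.filter (fun s => x ≤ s)).min' h
  else sB.max' hne

lemma roundUp_mem (sB : Finset ℝ) (hne : sB.Nonempty) (x : ℝ) : roundUp sB hne x ∈ sB := by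
  unfold roundUp
  by_cases h : (sB.filter (fun s => x ≤ s)).Nonempty
  · simp only [dif_pos h]
    exact Finset.filter_subset _ _ ((sB.filter (fun s => x ≤ s)).min'_mem h)
  · simp only [dif_neg h]
    exact sB.max'_mem hne

lemma roundUp_mono (sB : Finset ℝ) (hne : sB.Nonempty) : Monotone (roundUp sB hne) := by
  intro x y hxy
  have hT : sB.filter (fun s => y ≤ s) ⊆ sB.filter (fun s => x ≤ s) := by
    intro s hs
    rw [Finset.mem_filter] at hs ⊢
    exact ⟨hs.1, hxy.trans hs.2⟩
  unfold roundUp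
  by_cases h : (sB.filter (fun s => y ≤ s)).Nonempty
  · have hx : (sB.filter (fun s => x ≤ s)).Nonempty := h.mono hT
    simp only [dif_pos h, dif_pos hx]
    exact Finset.min'_le _ _ (hT ((sB.filter (fun s => y ≤ s)).min'_mem h))
  · simp only [dif_neg h]
    by_cases hx : (sB.filter (fun s => x ≤ s)).Nonempty
    · simp only [dif_pos hx]
      exact Finset.le_max' _ _
        (Finset.filter_subset _ _ ((sB.filter (fun s => x ≤ s)).min'_mem hx))
    · simp only [dif_neg hx]
      exact le_rfl

lemma roundUp_bounds (sB : Finset ℝ) (hne : sB.Nonempty) {x y : ℝ} (hy : y ∈ sB)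
    (hxy : x ≤ y) : x ≤ roundUp sB hne x ∧ roundUp sB hne x ≤ y := by
  have hyT : y ∈ sB.filter (fun s => x ≤ s) := Finset.mem_filter.2 ⟨hy, hxy⟩
  have h : (sB.filter (fun s => x ≤ s)).Nonempty := ⟨y, hyT⟩
  have hmem := (sB.filter (fun s => x ≤ s)).min'_mem h
  rw [Finset.mem_filter] at hmem
  unfold roundUp
  simp only [dif_pos h]
  exact ⟨hmem.2, Finset.min'_le _ _ hyT⟩

lemma roundUp_zero (sB : Finset ℝ) (hne : sB.Nonempty) (h0 : (0:ℝ) ∈ sB) :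
    roundUp sB hne 0 = 0 := by
  obtain ⟨h1, h2⟩ := roundUp_bounds sB hne h0 le_rfl
  linarith

/-! ### Basic facts about `pdist` -/

variable {V : Type*} [Fintype V] {H : SimpleGraph V} {p q : Sym2 V → ℝ} {r : V}

/-- The set of path costs from `r` to `v`. -/
def costSet (H : SimpleGraph V) (p : Sym2 V → ℝ) (r v : V) : Set ℝ :=
  {c : ℝ | ∃ q : H.Walk r v, q.IsPath ∧ c = (q.edges.map p).sum}

lemma pdist_eq (v : V) : pdist H p r v = sInf (costSet H p r v) := rfl

lemma cost_nonneg (hp : ∀ e, 0 ≤ p e) {u v : V} (w : H.Walk u v) :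
    0 ≤ (w.edges.map p).sum := by
  refine List.sum_nonneg ?_
  rintro x hx
  obtain ⟨e, _, rfl⟩ := List.mem_map.1 hx
  exact hp e

lemma costSet_nonempty (hH : H.Connected) (v : V) : (costSet H p r v).Nonempty := by
  classical
  obtain ⟨w⟩ := hH.preconnected r v
  exact ⟨_, w.bypass, w.bypass_isPath, rfl⟩

lemma costSet_finite (v : V) : (costSet H p r v).Finite := by
  classical
  haveI : DecidableRel H.Adj := Classical.decRel _
  have h : costSet H p r v
      = Set.range (fun P : H.Path r v => ((P : H.Walk r v).edges.map p).sum) := by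
    ext c
    constructor
    · rintro ⟨w, hw, rfl⟩; exact ⟨⟨w, hw⟩, rfl⟩
    · rintro ⟨⟨w, hw⟩, rfl⟩; exact ⟨w, hw, rfl⟩
  rw [h]
  exact Set.finite_range _

lemma pdist_le_path {v : V} (w : H.Walk r v) (hw : w.IsPath) :
    pdist H p r v ≤ (w.edges.map p).sum :=
  csInf_le (costSet_finite v).bddBelow ⟨w, hw, rfl⟩

lemma pdist_le_walk (hp : ∀ e, 0 ≤ p e) {v : V} (w : H.Walk r v) :
    pdist H p r v ≤ (w.edges.map p).sum := by
  classical
  refine (pdist_le_path w.bypass w.bypass_isPath).trans ?_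
  obtain ⟨l, hl, hsub⟩ :=
    List.Nodup.subperm w.bypass_isPath.isTrail.edges_nodup w.edges_bypass_subset
  calc (w.bypass.edges.map p).sum = (l.map p).sum := ((hl.map p).sum_eq).symm
    _ ≤ (w.edges.map p).sum := by
        refine List.Sublist.sum_le_sum (hsub.map p) ?_
        rintro x hx
        obtain ⟨e, _, rfl⟩ := List.mem_map.1 hx
        exact hp e

lemma pdist_nonneg (hH : H.Connected) (hp : ∀ e, 0 ≤ p e) (v : V) :
    0 ≤ pdist H p r v := by
  refine le_csInf (costSet_nonempty hH v) ?_
  rintro c ⟨w, _, rfl⟩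
  exact cost_nonneg hp w

lemma pdist_self (hH : H.Connected) (hp : ∀ e, 0 ≤ p e) :
    pdist H p r r = 0 := by
  refine le_antisymm ?_ (pdist_nonneg hH hp r)
  simpa using pdist_le_path (Walk.nil : H.Walk r r) (Walk.IsPath.nil)

lemma exists_min (hH : H.Connected) (v : V) :
    ∃ w : H.Walk r v, w.IsPath ∧ (w.edges.map p).sum = pdist H p r v := by
  have h := (costSet_nonempty (p := p) (r := r) hH v).csInf_mem (costSet_finite v)
  obtain ⟨w, hw, hc⟩ := h
  exact ⟨w, hw, hc.symm⟩

lemma pdist_triangle (hH : H.Connected) (hp : ∀ e, 0 ≤ p e) {u v : V} (w : H.Walk u v) :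
    pdist H p r v ≤ pdist H p r u + (w.edges.map p).sum := by
  obtain ⟨w0, _, hc0⟩ := exists_min (p := p) (r := r) hH u
  calc pdist H p r v ≤ ((w0.append w).edges.map p).sum := pdist_le_walk hp _
    _ = (w0.edges.map p).sum + (w.edges.map p).sum := by
        rw [Walk.edges_append, List.map_append, List.sum_append]
    _ = pdist H p r u + (w.edges.map p).sum := by rw [hc0]

/-! ### Prices induced by a potential -/

/-- Prices induced by a potential function `d`. -/
noncomputable def pOf (d : V → ℝ) : Sym2 V → ℝ :=
  Sym2.lift ⟨fun a c => |d a - d c|, fun a c => abs_sub_comm _ _⟩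

lemma pOf_nonneg (d : V → ℝ) (e : Sym2 V) : 0 ≤ pOf d e := by
  induction e using Sym2.ind with
  | _ a c => simp [pOf]

lemma pOf_mk (d : V → ℝ) (a c : V) : pOf d s(a, c) = |d a - d c| := rfl

lemma abs_le_cost (d : V → ℝ) {u v : V} (w : H.Walk u v) :
    |d v - d u| ≤ (w.edges.map (pOf d)).sum := by
  induction w with
  | nil => simp
  | @cons a c v' hadj w ih =>
    rw [Walk.edges_cons, List.map_cons, List.sum_cons, pOf_mk]
    calc |d v' - d a| ≤ |d v' - d c| + |d c - d a| := abs_sub_le _ _ _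
      _ ≤ |d a - d c| + (w.edges.map (pOf d)).sum := by
          rw [abs_sub_comm (d c) (d a)]; linarith

lemma cost_pOf_eq (hH : H.Connected) (hq : ∀ e, 0 ≤ q e) {g : ℝ → ℝ} (hg : Monotone g)
    {u v : V} (w : H.Walk u v)
    (h : pdist H q r u + (w.edges.map q).sum = pdist H q r v) :
    (w.edges.map (pOf (fun x => g (pdist H q r x)))).sum
      = g (pdist H q r v) - g (pdist H q r u) := by
  induction w with
  | nil => simp at h ⊢
  | @cons a c v' hadj w ih =>
    rw [Walk.edges_cons, List.map_cons, List.sum_cons] at h ⊢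
    have h1 : pdist H q r c ≤ pdist H q r a + q s(a, c) := by
      have := pdist_triangle (r := r) hH hq (Walk.cons hadj Walk.nil)
      simpa using this
    have h2 : pdist H q r v' ≤ pdist H q r c + (w.edges.map q).sum :=
      pdist_triangle (r := r) hH hq w
    have hac : pdist H q r c = pdist H q r a + q s(a, c) := by linarith
    have hcv : pdist H q r c + (w.edges.map q).sum = pdist H q r v' := by linarith
    have hmono : pdist H q r a ≤ pdist H q r c := by
      have := hq s(a, c); linarith
    have hedge : pOf (fun x => g (pdist H q r x)) s(a, c)
        = g (pdist H q r c) - g (pdist H q r a) := by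
      rw [pOf_mk]
      rw [abs_of_nonpos (by simp only [sub_nonpos]; exact hg hmono)]
      ring
    rw [ih hcv, hedge]
    ring

lemma pdist_pOf (hH : H.Connected) (hq : ∀ e, 0 ≤ q e) {g : ℝ → ℝ} (hg : Monotone g)
    (hg0 : g 0 = 0) (v : V) :
    pdist H (pOf (fun x => g (pdist H q r x))) r v = g (pdist H q r v) := by
  have hdr : g (pdist H q r r) = 0 := by rw [pdist_self hH hq, hg0]
  have hdv : 0 ≤ g (pdist H q r v) := by
    calc (0:ℝ) = g 0 := hg0.symm
      _ ≤ g (pdist H q r v) := hg (pdist_nonneg hH hq v)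
  refine le_antisymm ?_ ?_
  · obtain ⟨w, hw, hc⟩ := exists_min (p := q) (r := r) hH v
    have h0 : pdist H q r r + (w.edges.map q).sum = pdist H q r v := by
      rw [pdist_self hH hq, hc]; ring
    have hcost := cost_pOf_eq hH hq hg w h0
    have hle := pdist_le_path (p := pOf (fun x => g (pdist H q r x))) w hw
    rw [hcost, hdr, sub_zero] at hle
    exact hle
  · refine le_csInf (costSet_nonempty hH v) ?_
    rintro c ⟨w, _, rfl⟩
    have habs := abs_le_cost (fun x => g (pdist H q r x)) w
    simp only [hdr, sub_zero] at habs
    rwa [abs_of_nonneg hdv] at habs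

end Tollbooth

open Tollbooth in
/-- For a rooted tollbooth instance, some revenue-maximizing nonnegative price
assignment puts every root-distance in `{0} ∪ {budgets}`. -/
theorem stmt6 {V : Type*} [Fintype V] (H : SimpleGraph V) (hH : H.Connected) (r : V)
    {ι : Type*} [Fintype ι] (t : ι → V) (b : ι → ℝ) (hb : ∀ i, 0 < b i) :
    ∃ p : Sym2 V → ℝ, (∀ e, 0 ≤ p e) ∧
      (∀ q : Sym2 V → ℝ, (∀ e, 0 ≤ q e) → revenue H r t b q ≤ revenue H r t b p) ∧
      (∀ v : V, pdist H p r v ∈ ({0} ∪ Set.range b : Set ℝ)) := by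
  classical
  -- the finite set of candidate distance values
  set sB : Finset ℝ := insert 0 (Finset.image b Finset.univ) with hsBdef
  have hsB0 : (0:ℝ) ∈ sB := Finset.mem_insert_self _ _
  have hsBb : ∀ i, b i ∈ sB := fun i =>
    Finset.mem_insert_of_mem (Finset.mem_image_of_mem b (Finset.mem_univ i))
  have hsBne : sB.Nonempty := ⟨0, hsB0⟩
  have hsBnn : ∀ s ∈ sB, (0:ℝ) ≤ s := by
    intro s hs
    rw [hsBdef] at hs
    rcases Finset.mem_insert.1 hs with rfl | hs
    · exact le_refl 0
    · obtain ⟨i, _, rfl⟩ := Finset.mem_image.1 hs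
      exact (hb i).le
  set g : ℝ → ℝ := roundUp sB hsBne with hgdef
  have hgmem : ∀ x, g x ∈ sB := roundUp_mem sB hsBne
  have hgmono : Monotone g := roundUp_mono sB hsBne
  have hg0 : g 0 = 0 := roundUp_zero sB hsBne hsB0
  have hgnn : ∀ x, 0 ≤ g x := fun x => hsBnn _ (hgmem x)
  have hgb : ∀ (x : ℝ) (i : ι), x ≤ b i → x ≤ g x ∧ g x ≤ b i := fun x i hxi =>
    roundUp_bounds sB hsBne (hsBb i) hxi
  -- rounding any nonnegative price assignment does not decrease revenue
  have hround : ∀ q : Sym2 V → ℝ, (∀ e, 0 ≤ q e) →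
      revenue H r t b q ≤ revenue H r t b (pOf (fun x => g (pdist H q r x))) := by
    intro q hq
    unfold revenue
    refine Finset.sum_le_sum ?_
    intro i _
    rw [pdist_pOf hH hq hgmono hg0 (t i)]
    by_cases hx : pdist H q r (t i) ≤ b i
    · obtain ⟨h1, h2⟩ := hgb _ i hx
      rw [if_pos hx, if_pos h2]
      exact h1
    · rw [if_neg hx]
      by_cases h2 : g (pdist H q r (t i)) ≤ b i
      · rw [if_pos h2]; exact hgnn _
      · rw [if_neg h2]
  -- the finite family of candidate potentials
  set D : Set (V → ℝ) := Set.pi Set.univ (fun _ : V => (sB : Set ℝ)) with hDdef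
  have hDfin : D.Finite := Set.Finite.pi (fun _ => sB.finite_toSet)
  have hDne : D.Nonempty := ⟨fun _ => 0, by intro v _; exact hsB0⟩
  obtain ⟨d1, hd1D, hd1max⟩ :=
    Set.Finite.exists_maximalFor (fun d => revenue H r t b (pOf d)) D hDfin hDne
  have hd1max' : ∀ d ∈ D, revenue H r t b (pOf d) ≤ revenue H r t b (pOf d1) := by
    intro d hd
    by_contra hlt
    push_neg at hlt
    exact absurd (hd1max (j := d) hd hlt.le) (not_le.2 hlt)
  -- the witness
  have hp1nn : ∀ e, 0 ≤ pOf d1 e := pOf_nonneg d1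
  refine ⟨pOf (fun x => g (pdist H (pOf d1) r x)),
    pOf_nonneg _, ?_, ?_⟩
  · intro q hq
    have h1 : revenue H r t b q ≤ revenue H r t b (pOf (fun x => g (pdist H q r x))) :=
      hround q hq
    have hmemD : (fun x => g (pdist H q r x)) ∈ D := by
      intro v _; exact hgmem _
    have h2 : revenue H r t b (pOf (fun x => g (pdist H q r x)))
        ≤ revenue H r t b (pOf d1) := hd1max' _ hmemD
    have h3 : revenue H r t b (pOf d1)
        ≤ revenue H r t b (pOf (fun x => g (pdist H (pOf d1) r x))) :=
      hround (pOf d1) hp1nn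
    linarith
  · intro v
    rw [pdist_pOf (q := pOf d1) hH hp1nn hgmono hg0 v]
    have hmem := hgmem (pdist H (pOf d1) r v)
    rw [hsBdef] at hmem
    rcases Finset.mem_insert.1 hmem with h0 | hrng
    · left; exact h0
    · right
      obtain ⟨i, _, hi⟩ := Finset.mem_image.1 hrng
      exact ⟨i, hi⟩
end

section
/- If a fragment F of a cactus graph is split into s edge-disjoint connected subparts such that the two topmost edges of each cycle lie in the same subpart, then at most 2s − 2 vertices of F belong to more than one subpart. -/
open SimpleGraph List
set_option linter.unusedSectionVars false
set_option linter.unusedVariables false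

namespace CactusAux

variable {V : Type*} [DecidableEq V] {G : SimpleGraph V}

lemma mem_support_of_edge {u v x : V} {p : G.Walk u v} {e : Sym2 V}
    (he : e ∈ p.edges) (hx : x ∈ e) : x ∈ p.support := by
  induction e with
  | _ a b =>
    rcases Sym2.mem_iff.mp hx with rfl | rfl
    · exact p.fst_mem_support_of_mem_edges he
    · exact p.snd_mem_support_of_mem_edges he

lemma exists_start_edge {u v : V} (p : G.Walk u v) (h : u ≠ v) :
    ∃ e ∈ p.edges, u ∈ e := by
  cases p with
  | nil => exact absurd rfl h
  | @cons _ x _ h' q => exact ⟨s(u, x), by simp, by simp⟩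

lemma exists_end_edge {u v : V} (p : G.Walk u v) (h : u ≠ v) :
    ∃ e ∈ p.edges, v ∈ e := by
  obtain ⟨e, he, hv⟩ := exists_start_edge p.reverse h.symm
  exact ⟨e, by simpa [Walk.edges_reverse] using he, hv⟩

/-- In a path, the only edge containing the start vertex is the first edge. -/
lemma start_edge_unique : ∀ {u v : V} {p : G.Walk u v}, p.IsPath →
    ∀ e ∈ p.edges, ∀ f ∈ p.edges, u ∈ e → u ∈ f → e = f := by
  intro u v p hp
  induction p with
  | nil => simp
  | @cons u x _ h' q ih =>
    intro e he f hf hue huf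
    have key : ∀ g ∈ (Walk.cons h' q).edges, u ∈ g → g = s(u, x) := by
      intro g hg hug
      rw [Walk.edges_cons, List.mem_cons] at hg
      rcases hg with rfl | hg
      · rfl
      · exact absurd (mem_support_of_edge hg hug) (by
          have := hp.support_nodup
          simp only [Walk.support_cons, List.nodup_cons] at this
          exact this.1)
    rw [key e he hue, key f hf huf]

lemma end_edge_unique {u v : V} {p : G.Walk u v} (hp : p.IsPath) :
    ∀ e ∈ p.edges, ∀ f ∈ p.edges, v ∈ e → v ∈ f → e = f := by
  intro e he f hf hve hvf
  have := start_edge_unique (p := p.reverse) hp.reverse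
  simp only [Walk.edges_reverse, List.mem_reverse] at this
  exact this e he f hf hve hvf

lemma mem_tail_of_closed {u x : V} (c : G.Walk u u) (hne : c ≠ Walk.nil) :
    x ∈ c.support → x ∈ c.support.tail := by
  intro hx
  cases c with
  | nil => exact absurd rfl hne
  | @cons _ w _ h' q =>
    rw [Walk.support_cons, List.mem_cons] at hx
    rw [Walk.support_cons, List.tail_cons]
    rcases hx with rfl | hx
    · exact q.end_mem_support
    · exact hx

lemma mem_support_rotate {u v x : V} (c : G.Walk u u) (hne : c ≠ Walk.nil)
    (hv : v ∈ c.support) : x ∈ (c.rotate v hv).support ↔ x ∈ c.support := by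
  have hrot := Walk.support_rotate c v hv
  constructor
  · intro hx
    rw [Walk.support_eq_cons, List.mem_cons] at hx
    rcases hx with rfl | hx
    · exact hv
    · rw [hrot.mem_iff] at hx
      exact List.mem_of_mem_tail hx
  · intro hx
    have := mem_tail_of_closed c hne hx
    rw [← hrot.mem_iff] at this
    exact List.mem_of_mem_tail this

lemma edges_rotate_mem {u v : V} (c : G.Walk u u)
    (hv : v ∈ c.support) {e : Sym2 V} : e ∈ (c.rotate v hv).edges ↔ e ∈ c.edges :=
  (Walk.rotate_edges c v hv).mem_iff

/-- a cycle has at most two distinct edges at each vertex -/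
lemma two_edges_at_vertex {u v : V} {c : G.Walk u u} (hc : c.IsCycle)
    (hv : v ∈ c.support) {e₁ e₂ e₃ : Sym2 V}
    (h1 : e₁ ∈ c.edges) (h2 : e₂ ∈ c.edges) (h3 : e₃ ∈ c.edges)
    (m1 : v ∈ e₁) (m2 : v ∈ e₂) (m3 : v ∈ e₃)
    (d12 : e₁ ≠ e₂) (d13 : e₁ ≠ e₃) (d23 : e₂ ≠ e₃) : False := by
  have hc' := hc.rotate hv
  set c' := c.rotate v hv with hcdef
  have h1' : e₁ ∈ c'.edges := (edges_rotate_mem c hv).mpr h1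
  have h2' : e₂ ∈ c'.edges := (edges_rotate_mem c hv).mpr h2
  have h3' : e₃ ∈ c'.edges := (edges_rotate_mem c hv).mpr h3
  clear_value c'
  cases c' with
  | nil => exact hc'.ne_nil rfl
  | @cons _ w _ h' q =>
    have hq : q.IsPath := by
      rw [Walk.isPath_def]
      have := hc'.support_nodup
      simpa using this
    -- each eᵢ is either the head edge or the (unique) last edge of q
    have key : ∀ g ∈ (Walk.cons h' q).edges, v ∈ g →
        g = s(v, w) ∨ g ∈ q.edges := by
      intro g hg _
      rw [Walk.edges_cons, List.mem_cons] at hg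
      tauto
    have uq : ∀ g ∈ q.edges, ∀ g' ∈ q.edges, v ∈ g → v ∈ g' → g = g' :=
      fun g hg g' hg' hvg hvg' => end_edge_unique hq g hg g' hg' hvg hvg'
    rcases key e₁ h1' m1 with r1 | r1 <;> rcases key e₂ h2' m2 with r2 | r2 <;>
      rcases key e₃ h3' m3 with r3 | r3
    · exact d12 (r1.trans r2.symm)
    · exact d12 (r1.trans r2.symm)
    · exact d13 (r1.trans r3.symm)
    · exact d23 (uq _ r2 _ r3 m2 m3)
    · exact d23 (r2.trans r3.symm)
    · exact d13 (uq _ r1 _ r3 m1 m3)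
    · exact d12 (uq _ r1 _ r2 m1 m2)
    · exact d12 (uq _ r1 _ r2 m1 m2)

/-- Walking along a path, there is a first vertex (other than the start) belonging to `S`,
provided the end belongs to `S`. -/
lemma exists_first (S : Set V) : ∀ {a b : V} (p : G.Walk a b), p.IsPath → b ∈ S → a ≠ b →
    ∃ (y : V) (p₁ : G.Walk a y) (p₂ : G.Walk y b),
      y ∈ S ∧ y ≠ a ∧ p₁.IsPath ∧
      (∀ e ∈ p₁.edges, e ∈ p.edges) ∧ (∀ z ∈ p₁.support, z ∈ p.support) ∧
      (∀ z ∈ p₁.support, z ≠ a → z ≠ y → z ∉ S) ∧ p₁.append p₂ = p := by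
  intro a b p
  induction p with
  | nil => intro _ _ hab; exact absurd rfl hab
  | @cons a x b h' q ih =>
    intro hp hb hab
    by_cases hxS : x ∈ S
    · refine ⟨x, Walk.cons h' Walk.nil, q, hxS, h'.ne', ?_, ?_, ?_, ?_, ?_⟩
      · simp [Walk.isPath_def, h'.ne]
      · intro e he; simp at he; simp [he]
      · intro z hz; simp only [Walk.support_cons, Walk.support_nil, List.mem_cons,
          List.mem_singleton] at hz
        rcases hz with rfl | rfl | h; · simp
        · simp
        · simp at h
      · intro z hz hza hzx
        simp only [Walk.support_cons, Walk.support_nil, List.mem_cons,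
          List.mem_singleton] at hz
        rcases hz with rfl | rfl | h
        · exact absurd rfl hza
        · exact absurd rfl hzx
        · simp at h
      · simp
    · have hq : q.IsPath := hp.of_cons
      have hxb : x ≠ b := by rintro rfl; exact hxS hb
      obtain ⟨y, p₁, p₂, hyS, hyx, hp₁, hep, hsp, hint, happ⟩ := ih hq hb hxb
      have hanotq : a ∉ q.support := by
        have := hp.support_nodup
        simp only [Walk.support_cons, List.nodup_cons] at this
        exact this.1
      refine ⟨y, Walk.cons h' p₁, p₂, hyS, ?_, ?_, ?_, ?_, ?_, ?_⟩
      · rintro rfl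
        exact hanotq (hsp _ (p₁.end_mem_support))
      · rw [Walk.isPath_def, Walk.support_cons]
        exact List.nodup_cons.mpr ⟨fun hc => hanotq (hsp _ hc), hp₁.support_nodup⟩
      · intro e he
        rw [Walk.edges_cons, List.mem_cons] at he ⊢
        rcases he with rfl | he
        · exact Or.inl rfl
        · exact Or.inr (hep _ he)
      · intro z hz
        rw [Walk.support_cons, List.mem_cons] at hz ⊢
        rcases hz with rfl | hz
        · exact Or.inl rfl
        · exact Or.inr (hsp _ hz)
      · intro z hz hza hzy
        rw [Walk.support_cons, List.mem_cons] at hz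
        rcases hz with rfl | hz
        · exact absurd rfl hza
        · by_cases hzx : z = x
          · subst hzx; exact hxS
          · exact hint _ hz hzx hzy
      · rw [Walk.cons_append, happ]

/-- an internal vertex of a path is incident to two distinct edges of the path -/
lemma internal_two_edges {a b v : V} {p : G.Walk a b} (hp : p.IsPath)
    (hv : v ∈ p.support) (hva : v ≠ a) (hvb : v ≠ b) :
    ∃ e ∈ p.edges, ∃ f ∈ p.edges, e ≠ f ∧ v ∈ e ∧ v ∈ f := by
  obtain ⟨e, he, hve⟩ := exists_end_edge (p.takeUntil v hv) (Ne.symm hva)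
  obtain ⟨f, hf, hvf⟩ := exists_start_edge (p.dropUntil v hv) hvb
  have hsplit : p.edges = (p.takeUntil v hv).edges ++ (p.dropUntil v hv).edges := by
    conv_lhs => rw [← p.take_spec hv]
    rw [Walk.edges_append]
  have hnd : p.edges.Nodup := hp.isTrail.edges_nodup
  rw [hsplit] at hnd
  have hdisj := List.disjoint_of_nodup_append hnd
  refine ⟨e, ?_, f, ?_, ?_, hve, hvf⟩
  · exact p.edges_takeUntil_subset hv he
  · exact p.edges_dropUntil_subset hv hf
  · rintro rfl
    exact hdisj he hf

/-- if every support vertex of `p` lying on the closed walk `c` equals a single vertex `y`,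
then no edge of `p` is an edge of `c`. -/
lemma edge_not_in_cycle_of_support {u a b y : V} {p : G.Walk a b} {c : G.Walk u u}
    (h : ∀ z ∈ p.support, z ∈ c.support → z = y) : ∀ e ∈ p.edges, e ∉ c.edges := by
  intro e he hec
  induction e using Sym2.ind with
  | _ s t =>
    have hadj : G.Adj s t := p.adj_of_mem_edges he
    have hs : s = y := h s (p.fst_mem_support_of_mem_edges he) (c.fst_mem_support_of_mem_edges hec)
    have ht : t = y := h t (p.snd_mem_support_of_mem_edges he) (c.snd_mem_support_of_mem_edges hec)
    rw [hs, ht] at hadj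
    exact G.irrefl hadj

/-- In a cactus, there is no path between two distinct vertices of a cycle which is
internally disjoint from the cycle and uses no edge of the cycle. -/
lemma no_bypass (hG : IsCactus G) {u a b : V} {c : G.Walk u u} (hc : c.IsCycle)
    {p : G.Walk a b} (hp : p.IsPath) (ha : a ∈ c.support) (hb : b ∈ c.support)
    (hab : a ≠ b) (hint : ∀ x ∈ p.support, x ≠ a → x ≠ b → x ∉ c.support)
    (hedge : ∀ e ∈ p.edges, e ∉ c.edges) : False := by
  have hcne : c ≠ Walk.nil := hc.ne_nil
  have hc₂ : (c.rotate a ha).IsCycle := hc.rotate ha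
  set c₂ := c.rotate a ha with hc2def
  have hb₂ : b ∈ c₂.support := (mem_support_rotate c hcne ha).mpr hb
  set arc := c₂.dropUntil b hb₂ with harcdef
  have hspec := c₂.take_spec hb₂
  have htail : c₂.support.tail = (c₂.takeUntil b hb₂).support.tail ++ arc.support.tail := by
    conv_lhs => rw [← hspec]
    rw [Walk.tail_support_append]
  have hnd := hc₂.support_nodup
  rw [htail] at hnd
  have hdisjT := List.disjoint_of_nodup_append hnd
  have hbmem1 : b ∈ (c₂.takeUntil b hb₂).support.tail :=
    Walk.end_mem_tail_support_of_ne hab _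
  have hbnot2 : b ∉ arc.support.tail := fun hx => hdisjT hbmem1 hx
  have harc_path : arc.IsPath := by
    rw [Walk.isPath_def, arc.support_eq_cons]
    exact List.nodup_cons.mpr ⟨hbnot2, (List.nodup_append.mp hnd).2.1⟩
  have harc_edges : ∀ e ∈ arc.edges, e ∈ c.edges := by
    intro e he
    exact (edges_rotate_mem c ha).mp (c₂.edges_dropUntil_subset hb₂ he)
  have harc_supp : ∀ z ∈ arc.support, z ∈ c.support := by
    intro z hz
    exact (mem_support_rotate c hcne ha).mp (c₂.support_dropUntil_subset hb₂ hz)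
  set D := p.append arc with hDdef
  have hplen : p.length ≠ 0 := by
    cases p with
    | nil => exact absurd rfl hab
    | cons h q => simp
  have hDcyc : D.IsCycle := by
    refine ⟨⟨⟨?_⟩, ?_⟩, ?_⟩
    · rw [hDdef, Walk.edges_append]
      refine List.Nodup.append hp.edges_nodup harc_path.edges_nodup ?_
      intro e he₁ he₂
      exact hedge e he₁ (harc_edges e he₂)
    · intro hD
      have := congrArg Walk.length hD
      rw [hDdef, Walk.length_append] at this
      simp at this
      exact hplen (Walk.nil_iff_length_eq.mp this.1)
    · rw [hDdef, Walk.tail_support_append]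
      refine List.Nodup.append ?_ (List.nodup_append.mp hnd).2.1 ?_
      · have := hp.support_nodup
        rw [p.support_eq_cons] at this
        exact (List.nodup_cons.mp this).2
      · intro x hx₁ hx₂
        have hxp : x ∈ p.support := List.mem_of_mem_tail hx₁
        have hxa : x ≠ a := by
          rintro rfl
          have := hp.support_nodup
          rw [p.support_eq_cons] at this
          exact (List.nodup_cons.mp this).1 hx₁
        have hxb : x ≠ b := fun h => hbnot2 (h ▸ hx₂)
        exact hint x hxp hxa hxb (harc_supp x (List.mem_of_mem_tail hx₂))
  obtain ⟨f, hf, _⟩ := exists_start_edge arc (Ne.symm hab)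
  have hfc : f ∈ c.edges := harc_edges f hf
  have hfD : f ∈ D.edges := by rw [hDdef, Walk.edges_append]; exact List.mem_append_right _ hf
  have key := hG.2 D c hDcyc hc f hfD hfc
  obtain ⟨g, hg, _⟩ := exists_start_edge p hab
  have hgD : g ∈ D.edges := by rw [hDdef, Walk.edges_append]; exact List.mem_append_left _ hg
  exact hedge g hg ((key g).mp hgD)

/-- Every cycle in a cactus has an entry vertex: the unique vertex closest to `r`,
through which every access from `r` must pass. -/
lemma entry_vertex (hG : IsCactus G) (r : V) {u : V} {c : G.Walk u u} (hc : c.IsCycle) :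
    ∃ v0 ∈ c.support,
      (∀ w ∈ c.support, w ≠ v0 → G.dist r v0 < G.dist r w) ∧
      (∃ w0 : G.Walk v0 r, ∀ z ∈ w0.support, z ∈ c.support → z = v0) ∧
      (∀ (y : V), y ∈ c.support → ∀ (ρ : G.Walk r y),
        (∀ z ∈ ρ.support, z ∈ c.support → z = y) → y = v0) := by
  by_cases hr : r ∈ c.support
  · refine ⟨r, hr, ?_, ⟨Walk.nil, by simp⟩, ?_⟩
    · intro w hw hwr
      have : G.dist r r = 0 := by simp
      rw [this]
      exact (hG.1).pos_dist_of_ne (Ne.symm hwr)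
    · intro y hy ρ hρ
      exact (hρ r ρ.start_mem_support hr).symm
  · obtain ⟨σ₀, hσ₀p, _⟩ := (hG.1).exists_path_of_dist r u
    have hru : r ≠ u := by rintro rfl; exact hr c.start_mem_support
    obtain ⟨v0, π₀, π₀', hv0S, hv0r, hπ₀path, hπ₀edges, hπ₀supp, hπ₀int, happ₀⟩ :=
      exists_first {z | z ∈ c.support} σ₀ hσ₀p c.start_mem_support hru
    have avoid₀ : ∀ z ∈ π₀.support, z ∈ c.support → z = v0 := by
      intro z hz hzc
      by_contra hne
      have hzr : z ≠ r := by rintro rfl; exact hr hzc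
      exact hπ₀int z hz hzr hne hzc
    have hU3 : ∀ (y : V), y ∈ c.support → ∀ (ρ : G.Walk r y),
        (∀ z ∈ ρ.support, z ∈ c.support → z = y) → y = v0 := by
      intro y hy ρ hρavoid
      by_contra hne
      set w := ρ.reverse.append π₀ with hwdef
      have hwsupp : ∀ z ∈ w.support, z ∈ c.support → z = y ∨ z = v0 := by
        intro z hz hzc
        rw [hwdef, Walk.mem_support_append_iff] at hz
        rcases hz with hz | hz
        · rw [Walk.support_reverse, List.mem_reverse] at hz
          exact Or.inl (hρavoid z hz hzc)
        · exact Or.inr (avoid₀ z hz hzc)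
      have hqsupp : ∀ z ∈ w.bypass.support, z ∈ c.support → z = y ∨ z = v0 :=
        fun z hz hzc => hwsupp z (w.support_bypass_subset hz) hzc
      refine no_bypass hG hc w.bypass_isPath hy hv0S hne ?_ ?_
      · intro x hx hxy hxv0 hxc
        rcases hqsupp x hx hxc with h | h
        · exact hxy h
        · exact hxv0 h
      · intro e he hec
        have hew : e ∈ w.edges := w.edges_bypass_subset he
        rw [hwdef, Walk.edges_append, List.mem_append] at hew
        rcases hew with hew | hew
        · rw [Walk.edges_reverse, List.mem_reverse] at hew
          exact edge_not_in_cycle_of_support hρavoid e hew hec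
        · exact edge_not_in_cycle_of_support avoid₀ e hew hec
    refine ⟨v0, hv0S, ?_, ⟨π₀.reverse, ?_⟩, hU3⟩
    · intro w hw hwv0
      obtain ⟨σ, hσpath, hσlen⟩ := (hG.1).exists_path_of_dist r w
      have hrw : r ≠ w := by rintro rfl; exact hr hw
      obtain ⟨y₁, π₁, π₂, hy₁S, hy₁r, hπ₁path, hπ₁edges, hπ₁supp, hπ₁int, happ₁⟩ :=
        exists_first {z | z ∈ c.support} σ hσpath hw hrw
      have avoid₁ : ∀ z ∈ π₁.support, z ∈ c.support → z = y₁ := by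
        intro z hz hzc
        by_contra hne
        have hzr : z ≠ r := by rintro rfl; exact hr hzc
        exact hπ₁int z hz hzr hne hzc
      have hy₁v0 : y₁ = v0 := hU3 y₁ hy₁S π₁ avoid₁
      have h1 : G.dist r v0 ≤ π₁.length := by
        rw [← hy₁v0]; exact SimpleGraph.dist_le π₁
      have h2 : 1 ≤ π₂.length := by
        cases π₂ with
        | nil =>
          rw [hy₁v0] at hwv0
          exact absurd rfl (Ne.symm hwv0)
        | cons h q => simp [Nat.succ_le_succ]
      have h3 : π₁.length + π₂.length = G.dist r w := by
        rw [← hσlen, ← happ₁, Walk.length_append]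
      omega
    · intro z hz hzc
      rw [Walk.support_reverse, List.mem_reverse] at hz
      exact avoid₀ z hz hzc

section Trap

/-- `z` is trapped below cycle `c` (with entry `v0`): every walk to `r` meets `c` off `v0`. -/
def InTrap (G : SimpleGraph V) (r : V) {u : V} (c : G.Walk u u) (v0 : V) (z : V) : Prop :=
  ∀ w : G.Walk z r, ∃ x ∈ w.support, x ∈ c.support ∧ x ≠ v0

variable {r u v0 : V} {c : G.Walk u u}

lemma inTrap_of_mem {z : V} (hzc : z ∈ c.support) (hzv0 : z ≠ v0) :
    InTrap G r c v0 z := fun w => ⟨z, ⟨w.start_mem_support, hzc, hzv0⟩⟩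

lemma not_inTrap_v0 (hesc : ∃ w0 : G.Walk v0 r, ∀ z ∈ w0.support, z ∈ c.support → z = v0) :
    ¬ InTrap G r c v0 v0 := by
  obtain ⟨w0, hw0⟩ := hesc
  intro h
  obtain ⟨x, hx, hxC, hxv0⟩ := h w0
  exact hxv0 (hw0 x hx hxC)

lemma inTrap_of_adj (hG : IsCactus G) (hc : c.IsCycle)
    (hmin : ∀ w ∈ c.support, w ≠ v0 → G.dist r v0 < G.dist r w)
    (hU3 : ∀ (y : V), y ∈ c.support → ∀ (ρ : G.Walk r y),
      (∀ z ∈ ρ.support, z ∈ c.support → z = y) → y = v0)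
    {z z' : V} (hzc : z ∈ c.support) (hzv0 : z ≠ v0) (hz'c : z' ∉ c.support)
    (h : G.Adj z z') : InTrap G r c v0 z' := by
  intro w
  by_contra hno'
  have hno : ∀ x ∈ w.support, x ∈ c.support → x = v0 := by
    intro x hx hxC
    by_contra hxv0
    exact hno' ⟨x, ⟨hx, hxC, hxv0⟩⟩
  set W := Walk.cons h w with hWdef
  set ρ := W.bypass with hρdef
  have hρpath : ρ.IsPath := W.bypass_isPath
  have hρsupp : ∀ x ∈ ρ.support, x ∈ c.support → x = z ∨ x = v0 := by
    intro x hx hxC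
    have := W.support_bypass_subset hx
    rw [hWdef, Walk.support_cons, List.mem_cons] at this
    rcases this with rfl | hxw
    · exact Or.inl rfl
    · exact Or.inr (hno x hxw hxC)
  have hρedge : ∀ e ∈ ρ.edges, e ∉ c.edges := by
    intro e he hec
    have := W.edges_bypass_subset he
    rw [hWdef, Walk.edges_cons, List.mem_cons] at this
    rcases this with rfl | hew
    · exact hz'c (mem_support_of_edge hec (Sym2.mem_mk_right z z'))
    · exact edge_not_in_cycle_of_support hno e hew hec
  have hrz : r ≠ z := by
    intro hrzeq
    have := hmin z hzc hzv0
    rw [← hrzeq, SimpleGraph.dist_self] at this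
    omega
  obtain ⟨y₁, π₁, π₂, hy₁S, hy₁r, hπ₁path, hπ₁edges, hπ₁supp, hπ₁int, happ₁⟩ :=
    exists_first {x | x ∈ c.support} ρ.reverse hρpath.reverse hzc hrz
  have hmemρ : ∀ q ∈ π₁.support, q ∈ ρ.support := by
    intro q hq
    have := hπ₁supp q hq
    rwa [Walk.support_reverse, List.mem_reverse] at this
  have hπ₁edges' : ∀ e ∈ π₁.edges, e ∉ c.edges := by
    intro e he
    have := hπ₁edges e he
    rw [Walk.edges_reverse, List.mem_reverse] at this
    exact hρedge e this
  have hy₁cases : y₁ = z ∨ y₁ = v0 := hρsupp y₁ (hmemρ _ π₁.end_mem_support) hy₁S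
  rcases hy₁cases with hcase | hcase
  · -- the first hit from r is z itself
    by_cases hrC : r ∈ c.support
    · refine no_bypass hG hc hπ₁path hrC hy₁S (Ne.symm hy₁r) ?_ hπ₁edges'
      intro x hx hxr hxy hxC
      exact hπ₁int x hx hxr hxy hxC
    · have : y₁ = v0 := by
        refine hU3 y₁ hy₁S π₁ ?_
        intro q hq hqC
        by_contra hqy
        have hqr : q ≠ r := by rintro rfl; exact hrC hqC
        exact hπ₁int q hq hqr hqy hqC
      exact hzv0 (hcase ▸ this)
  · -- π₂ is a path from v0 = y₁ to z avoiding c internally: contradiction with no_bypass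
    have hπ₂path : π₂.IsPath := by
      have : (π₁.append π₂).IsPath := by rw [happ₁]; exact hρpath.reverse
      exact this.of_append_right
    have hπ₂supp : ∀ q ∈ π₂.support, q ∈ ρ.support := by
      intro q hq
      have : q ∈ (π₁.append π₂).support := Walk.subset_support_append_right _ _ hq
      rw [happ₁, Walk.support_reverse, List.mem_reverse] at this
      exact this
    have hπ₂int : ∀ x ∈ π₂.support, x ≠ y₁ → x ≠ z → x ∉ c.support := by
      intro x hx hxy₁ hxz hxC
      rcases hρsupp x (hπ₂supp x hx) hxC with h' | h'
      · exact hxz h'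
      · exact hxy₁ (h'.trans hcase.symm)
    have hπ₂edges : ∀ e ∈ π₂.edges, e ∉ c.edges := by
      intro e he
      have : e ∈ (π₁.append π₂).edges := by
        rw [Walk.edges_append, List.mem_append]; exact Or.inr he
      rw [happ₁, Walk.edges_reverse, List.mem_reverse] at this
      exact hρedge e this
    have hy₁z : y₁ ≠ z := by rw [hcase]; exact Ne.symm hzv0
    exact no_bypass hG hc hπ₂path hy₁S hzc hy₁z hπ₂int hπ₂edges

lemma inTrap_stay (hG : IsCactus G) (hc : c.IsCycle)
    (hmin : ∀ w ∈ c.support, w ≠ v0 → G.dist r v0 < G.dist r w)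
    (hU3 : ∀ (y : V), y ∈ c.support → ∀ (ρ : G.Walk r y),
      (∀ z ∈ ρ.support, z ∈ c.support → z = y) → y = v0) :
    ∀ {x y : V} (w : G.Walk x y), InTrap G r c v0 x →
      (∀ e ∈ w.edges, v0 ∈ e → e ∉ c.edges) → ∀ z ∈ w.support, InTrap G r c v0 z := by
  intro x y w
  induction w with
  | nil =>
    intro hx _ z hz
    simp only [Walk.support_nil, List.mem_singleton] at hz
    exact hz ▸ hx
  | @cons aa bb cc hadj q ih =>
    intro hx hedge z hz
    have hx' : InTrap G r c v0 bb := by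
      by_cases hxC : aa ∈ c.support ∧ aa ≠ v0
      · by_cases hx'C : bb ∈ c.support
        · by_cases hx'v0 : bb = v0
          · -- the edge must be a cycle edge at v0, excluded by hedge; chords are impossible
            exfalso
            have hchord : s(aa, bb) ∈ c.edges := by
              by_contra hnc
              refine no_bypass hG hc (p := Walk.cons hadj Walk.nil) ?_ hxC.1 hx'C
                (by rw [hx'v0]; exact hxC.2) ?_ ?_
              · simp [Walk.isPath_def, hadj.ne]
              · intro q' hq hq1 hq2
                simp only [Walk.support_cons, Walk.support_nil, List.mem_cons,
                  List.mem_singleton] at hq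
                rcases hq with rfl | rfl | hq
                · exact absurd rfl hq1
                · exact absurd rfl hq2
                · simp at hq
              · intro e he
                simp only [Walk.edges_cons, Walk.edges_nil, List.mem_singleton] at he
                rw [he]
                exact hnc
            refine hedge s(aa, bb) (by simp) ?_ hchord
            rw [← hx'v0]
            exact Sym2.mem_mk_right aa bb
          · exact inTrap_of_mem hx'C hx'v0
        · exact inTrap_of_adj hG hc hmin hU3 hxC.1 hxC.2 hx'C hadj
      · -- aa is not an exit point: any neighbour is trapped
        intro w'
        obtain ⟨x₀, hx₀supp, hx₀C, hx₀v0⟩ := hx (Walk.cons hadj w')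
        rw [Walk.support_cons, List.mem_cons] at hx₀supp
        rcases hx₀supp with rfl | hx₀supp
        · exact absurd ⟨hx₀C, hx₀v0⟩ hxC
        · exact ⟨x₀, hx₀supp, hx₀C, hx₀v0⟩
    rw [Walk.support_cons, List.mem_cons] at hz
    rcases hz with rfl | hz
    · exact hx
    · exact ih hx' (fun e he => hedge e (by rw [Walk.edges_cons]; exact List.mem_cons_of_mem _ he)) z hz

lemma dist_lt_of_inTrap (hG : IsCactus G)
    (hmin : ∀ w ∈ c.support, w ≠ v0 → G.dist r v0 < G.dist r w)
    {z : V} (hz : InTrap G r c v0 z) : G.dist r v0 < G.dist r z := by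
  obtain ⟨σ, hσp, hσlen⟩ := (hG.1).exists_path_of_dist r z
  obtain ⟨x, hxsupp, hxC, hxv0⟩ := hz σ.reverse
  rw [Walk.support_reverse, List.mem_reverse] at hxsupp
  have h1 : G.dist r x ≤ (σ.takeUntil x hxsupp).length := SimpleGraph.dist_le _
  have h2 : (σ.takeUntil x hxsupp).length ≤ σ.length := σ.length_takeUntil_le hxsupp
  have h3 := hmin x hxC hxv0
  omega

end Trap

lemma path_in_part {a b : V} (w : G.Walk a b) {S : Set (Sym2 V)} (hw : ∀ e ∈ w.edges, e ∈ S) :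
    ∃ p : G.Walk a b, p.IsPath ∧ ∀ e ∈ p.edges, e ∈ S :=
  ⟨w.bypass, w.bypass_isPath, fun e he => hw e (w.edges_bypass_subset he)⟩

/-- From two edge-disjoint paths between the same endpoints we extract a cycle based at the
common start, obtained by gluing initial segments of the two paths. -/
lemma meet_cycle {a b : V} {p q : G.Walk a b} (hp : p.IsPath) (hq : q.IsPath)
    (hab : a ≠ b) (hdisj : ∀ e ∈ p.edges, e ∉ q.edges) :
    ∃ (y : V) (p₁ : G.Walk a y) (q₁ : G.Walk a y),
      p₁.IsPath ∧ q₁.IsPath ∧ y ≠ a ∧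
      (∀ e ∈ p₁.edges, e ∈ p.edges) ∧ (∀ e ∈ q₁.edges, e ∈ q.edges) ∧
      (p₁.append q₁.reverse).IsCycle := by
  obtain ⟨y, p₁, p₂, hyq, hya, hp₁, hp₁e, hp₁s, hp₁int, happ⟩ :=
    exists_first {z | z ∈ q.support} p hp q.end_mem_support hab
  have hyq' : y ∈ q.support := hyq
  have hq₁path : (q.takeUntil y hyq').IsPath := hq.takeUntil hyq'
  set q₁ := q.takeUntil y hyq' with hq₁def
  have hq₁e : ∀ e ∈ q₁.edges, e ∈ q.edges := fun e he => q.edges_takeUntil_subset hyq' he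
  have hp₁nil : p₁.length ≠ 0 := by
    cases p₁ with
    | nil => exact absurd rfl hya
    | cons _ _ => simp
  set D := p₁.append q₁.reverse with hDdef
  have hDcyc : D.IsCycle := by
    refine ⟨⟨⟨?_⟩, ?_⟩, ?_⟩
    · rw [hDdef, Walk.edges_append]
      refine List.Nodup.append hp₁.edges_nodup
        (by rw [Walk.edges_reverse, List.nodup_reverse]; exact hq₁path.edges_nodup) ?_
      intro e he₁ he₂
      rw [Walk.edges_reverse, List.mem_reverse] at he₂
      exact hdisj e (hp₁e e he₁) (hq₁e e he₂)
    · intro hD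
      have := congrArg Walk.length hD
      rw [hDdef, Walk.length_append] at this
      simp at this
      exact hp₁nil (Walk.nil_iff_length_eq.mp this.1)
    · rw [hDdef, Walk.tail_support_append]
      have hq₁rev : q₁.reverse.support = y :: q₁.reverse.support.tail :=
        q₁.reverse.support_eq_cons
      have hq₁revnodup : q₁.reverse.support.Nodup := hq₁path.reverse.support_nodup
      refine List.Nodup.append ?_ ?_ ?_
      · exact (List.nodup_cons.mp (p₁.support_eq_cons ▸ hp₁.support_nodup)).2
      · rw [hq₁rev] at hq₁revnodup
        exact (List.nodup_cons.mp hq₁revnodup).2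
      · intro x hx₁ hx₂
        have hxp : x ∈ p₁.support := List.mem_of_mem_tail hx₁
        have hxa : x ≠ a := by
          rintro rfl
          exact (List.nodup_cons.mp (p₁.support_eq_cons ▸ hp₁.support_nodup)).1 hx₁
        have hxy : x ≠ y := by
          rintro rfl
          rw [hq₁rev] at hq₁revnodup
          exact (List.nodup_cons.mp hq₁revnodup).1 hx₂
        have hxq : x ∈ q.support := by
          have : x ∈ q₁.reverse.support := List.mem_of_mem_tail hx₂
          rw [Walk.support_reverse, List.mem_reverse] at this
          exact q.support_takeUntil_subset hyq' this
        exact hp₁int x hxp hxa hxy hxq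
  exact ⟨y, p₁, q₁, hp₁, hq₁path, hya, hp₁e, hq₁e, hDcyc⟩

lemma glued_edges {a y : V} (p₁ q₁ : G.Walk a y) :
    ∀ e, e ∈ (p₁.append q₁.reverse).edges ↔ e ∈ p₁.edges ∨ e ∈ q₁.edges := by
  intro e
  rw [Walk.edges_append, List.mem_append, Walk.edges_reverse, List.mem_reverse]

lemma exists_edge_at {u v : V} {c : G.Walk u u} (hc : c.IsCycle) (hv : v ∈ c.support) :
    ∃ e ∈ c.edges, v ∈ e := by
  have hcne : c ≠ Walk.nil := hc.ne_nil
  have h2 : (c.rotate v hv) ≠ Walk.nil := (hc.rotate hv).ne_nil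
  cases hrc : c.rotate v hv with
  | nil => exact absurd hrc h2
  | @cons _ w _ hadj q =>
    refine ⟨s(v, w), ?_, Sym2.mem_mk_left v w⟩
    rw [← edges_rotate_mem c hv, hrc]
    simp

lemma edge_endpoints {u : V} {c : G.Walk u u} {e : Sym2 V} (he : e ∈ c.edges) :
    ∃ x y, e = s(x, y) ∧ x ∈ c.support ∧ y ∈ c.support := by
  induction e using Sym2.ind with
  | _ x y =>
    exact ⟨x, y, rfl, c.fst_mem_support_of_mem_edges he, c.snd_mem_support_of_mem_edges he⟩

section Pair

variable {r : V} {s : ℕ} {P : Fin s → Set (Sym2 V)} {i j : Fin s}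

/-- Core confinement argument: if `C` and `C'` are edge-disjoint cycles whose edges all lie in
parts `i ∪ j`, both containing edges of both parts, then `C'` is trapped below `C`. -/
lemma cycle_trapped_aux (hG : IsCactus G)
    (hdisj : ∀ i j, i ≠ j → Disjoint (P i) (P j))
    (hconn : ∀ i, ∀ a b : V, (∃ e ∈ P i, a ∈ e) → (∃ e ∈ P i, b ∈ e) →
      ∃ w : G.Walk a b, ∀ e ∈ w.edges, e ∈ P i)
    (htop : ∀ {u : V} (c : G.Walk u u), c.IsCycle →
      ∀ v ∈ c.support, (∀ w ∈ c.support, G.dist r v ≤ G.dist r w) →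
      ∀ e f, e ∈ c.edges → f ∈ c.edges → v ∈ e → v ∈ f →
        ∀ i, e ∈ P i → f ∈ P i)
    (hij : i ≠ j)
    {a a' : V} {C : G.Walk a a} {C' : G.Walk a' a'} (hC : C.IsCycle) (hC' : C'.IsCycle)
    (hCj : ∃ e ∈ C.edges, e ∈ P j)
    (hC'j : ∃ e ∈ C'.edges, e ∈ P j)
    (hED : ∀ e ∈ C'.edges, e ∉ C.edges)
    {v0 : V} (hv0 : v0 ∈ C.support)
    (hmin : ∀ w ∈ C.support, w ≠ v0 → G.dist r v0 < G.dist r w)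
    (hU3 : ∀ (y : V), y ∈ C.support → ∀ (ρ : G.Walk r y),
      (∀ z ∈ ρ.support, z ∈ C.support → z = y) → y = v0)
    {e₀ : Sym2 V} (he₀C : e₀ ∈ C.edges) (hv0e₀ : v0 ∈ e₀) (he₀i : e₀ ∈ P i) :
    ∀ z ∈ C'.support, InTrap G r C v0 z := by
  have hminle : ∀ w ∈ C.support, G.dist r v0 ≤ G.dist r w := by
    intro w hw
    by_cases h : w = v0
    · rw [h]
    · exact (hmin w hw h).le
  -- every vertex touched by part j is trapped
  obtain ⟨eτ, heτC, heτj⟩ := hCj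
  have hv0eτ : v0 ∉ eτ := by
    intro hv0eτ
    have : eτ ∈ P i := htop C hC v0 hv0 hminle e₀ eτ he₀C heτC hv0e₀ hv0eτ i he₀i
    exact Set.disjoint_left.mp (hdisj i j hij) this heτj
  obtain ⟨x₁, y₁, heτeq, hx₁C, _⟩ := edge_endpoints heτC
  have hx₁eτ : x₁ ∈ eτ := by rw [heτeq]; exact Sym2.mem_mk_left x₁ y₁
  have hx₁v0 : x₁ ≠ v0 := by rintro rfl; exact hv0eτ hx₁eτ
  have hτtrap : ∀ z : V, (∃ e ∈ P j, z ∈ e) → InTrap G r C v0 z := by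
    intro z hz
    obtain ⟨w, hw⟩ := hconn j x₁ z ⟨eτ, heτj, hx₁eτ⟩ hz
    refine inTrap_stay hG hC hmin hU3 w (inTrap_of_mem hx₁C hx₁v0) ?_ z w.end_mem_support
    intro e he hv0e heC
    have : e ∈ P i := htop C hC v0 hv0 hminle e₀ e he₀C heC hv0e₀ hv0e i he₀i
    exact Set.disjoint_left.mp (hdisj i j hij) this (hw e he)
  -- C' has a j-edge; its endpoint is trapped; walk around C'
  obtain ⟨e', he'C', he'j⟩ := hC'j
  obtain ⟨x', y', he'eq, hx'C', _⟩ := edge_endpoints he'C'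
  have hx'trap : InTrap G r C v0 x' :=
    hτtrap x' ⟨e', he'j, by rw [he'eq]; exact Sym2.mem_mk_left x' y'⟩
  intro z hz
  have hz' : z ∈ (C'.rotate x' hx'C').support :=
    (mem_support_rotate C' hC'.ne_nil hx'C').mpr hz
  refine inTrap_stay hG hC hmin hU3 (C'.rotate x' hx'C') hx'trap ?_ z hz'
  intro e he _ heC
  exact hED e ((edges_rotate_mem C' hx'C').mp he) heC

lemma cycle_trapped (hG : IsCactus G)
    (hdisj : ∀ i j, i ≠ j → Disjoint (P i) (P j))
    (hconn : ∀ i, ∀ a b : V, (∃ e ∈ P i, a ∈ e) → (∃ e ∈ P i, b ∈ e) →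
      ∃ w : G.Walk a b, ∀ e ∈ w.edges, e ∈ P i)
    (htop : ∀ {u : V} (c : G.Walk u u), c.IsCycle →
      ∀ v ∈ c.support, (∀ w ∈ c.support, G.dist r v ≤ G.dist r w) →
      ∀ e f, e ∈ c.edges → f ∈ c.edges → v ∈ e → v ∈ f →
        ∀ i, e ∈ P i → f ∈ P i)
    (hij : i ≠ j)
    {a a' : V} {C : G.Walk a a} {C' : G.Walk a' a'} (hC : C.IsCycle) (hC' : C'.IsCycle)
    (hCij : ∀ e ∈ C.edges, e ∈ P i ∨ e ∈ P j)
    (hCi : ∃ e ∈ C.edges, e ∈ P i) (hCj : ∃ e ∈ C.edges, e ∈ P j)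
    (hC'i : ∃ e ∈ C'.edges, e ∈ P i) (hC'j : ∃ e ∈ C'.edges, e ∈ P j)
    (hED : ∀ e ∈ C'.edges, e ∉ C.edges)
    {v0 : V} (hv0 : v0 ∈ C.support)
    (hmin : ∀ w ∈ C.support, w ≠ v0 → G.dist r v0 < G.dist r w)
    (hU3 : ∀ (y : V), y ∈ C.support → ∀ (ρ : G.Walk r y),
      (∀ z ∈ ρ.support, z ∈ C.support → z = y) → y = v0) :
    ∀ z ∈ C'.support, InTrap G r C v0 z := by
  obtain ⟨e₀, he₀C, hv0e₀⟩ := exists_edge_at hC hv0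
  rcases hCij e₀ he₀C with he₀i | he₀j
  · exact cycle_trapped_aux hG hdisj hconn htop hij hC hC' hCj hC'j hED hv0 hmin hU3
      he₀C hv0e₀ he₀i
  · exact cycle_trapped_aux hG hdisj hconn htop (Ne.symm hij) hC hC' hCi hC'i hED hv0 hmin hU3
      he₀C hv0e₀ he₀j

/-- Two distinct parts share at most two vertices: three distinct shared vertices are absurd. -/
lemma pair_shared_aux (hG : IsCactus G)
    (hdisj : ∀ i j, i ≠ j → Disjoint (P i) (P j))
    (hconn : ∀ i, ∀ a b : V, (∃ e ∈ P i, a ∈ e) → (∃ e ∈ P i, b ∈ e) →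
      ∃ w : G.Walk a b, ∀ e ∈ w.edges, e ∈ P i)
    (htop : ∀ {u : V} (c : G.Walk u u), c.IsCycle →
      ∀ v ∈ c.support, (∀ w ∈ c.support, G.dist r v ≤ G.dist r w) →
      ∀ e f, e ∈ c.edges → f ∈ c.edges → v ∈ e → v ∈ f →
        ∀ i, e ∈ P i → f ∈ P i)
    (hij : i ≠ j) {v₁ v₂ v₃ : V}
    (h1i : ∃ e ∈ P i, v₁ ∈ e) (h1j : ∃ e ∈ P j, v₁ ∈ e)
    (h2i : ∃ e ∈ P i, v₂ ∈ e) (h2j : ∃ e ∈ P j, v₂ ∈ e)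
    (h3i : ∃ e ∈ P i, v₃ ∈ e) (h3j : ∃ e ∈ P j, v₃ ∈ e)
    (d12 : v₁ ≠ v₂) (d13 : v₁ ≠ v₃) (d23 : v₂ ≠ v₃) : False := by
  have mk : ∀ (x z : V), x ≠ z → (∃ e ∈ P i, x ∈ e) → (∃ e ∈ P j, x ∈ e) →
      (∃ e ∈ P i, z ∈ e) → (∃ e ∈ P j, z ∈ e) →
      ∃ (D : G.Walk x x), D.IsCycle ∧ (∀ e ∈ D.edges, e ∈ P i ∨ e ∈ P j) ∧
        (∃ e ∈ D.edges, e ∈ P i ∧ x ∈ e) ∧ (∃ f ∈ D.edges, f ∈ P j ∧ x ∈ f) ∧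
        ∃ (y : V) (p₁ q₁ : G.Walk x y), p₁.IsPath ∧ q₁.IsPath ∧ y ≠ x ∧
          (∀ e ∈ p₁.edges, e ∈ P i) ∧ (∀ e ∈ q₁.edges, e ∈ P j) ∧
          D = p₁.append q₁.reverse := by
    intro x z hxz hxi hxj hzi hzj
    obtain ⟨w₁, hw₁⟩ := hconn i x z hxi hzi
    obtain ⟨p, hpp, hpe⟩ := path_in_part w₁ hw₁
    obtain ⟨w₂, hw₂⟩ := hconn j x z hxj hzj
    obtain ⟨q, hqp, hqe⟩ := path_in_part w₂ hw₂
    have hdpq : ∀ e ∈ p.edges, e ∉ q.edges := fun e hep heq =>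
      Set.disjoint_left.mp (hdisj i j hij) (hpe e hep) (hqe e heq)
    obtain ⟨y, p₁, q₁, hp₁, hq₁, hyx, hp₁e, hq₁e, hcyc⟩ := meet_cycle hpp hqp hxz hdpq
    refine ⟨p₁.append q₁.reverse, hcyc, ?_, ?_, ?_, y, p₁, q₁, hp₁, hq₁, hyx,
      (fun e he => hpe e (hp₁e e he)), (fun e he => hqe e (hq₁e e he)), rfl⟩
    · intro e he
      rcases (glued_edges p₁ q₁ e).mp he with h | h
      · exact Or.inl (hpe e (hp₁e e h))
      · exact Or.inr (hqe e (hq₁e e h))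
    · obtain ⟨e, he, hxe⟩ := exists_start_edge p₁ (Ne.symm hyx)
      exact ⟨e, (glued_edges p₁ q₁ e).mpr (Or.inl he), hpe e (hp₁e e he), hxe⟩
    · obtain ⟨f, hf, hxf⟩ := exists_start_edge q₁ (Ne.symm hyx)
      exact ⟨f, (glued_edges p₁ q₁ f).mpr (Or.inr hf), hqe f (hq₁e f hf), hxf⟩
  obtain ⟨C₁, hC₁, hC₁ij, hC₁i, hC₁j, y₁, p₁, q₁, hp₁, hq₁, hy₁, hp₁e, hq₁e, hC₁eq⟩ :=
    mk v₁ v₂ d12 h1i h1j h2i h2j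
  obtain ⟨C₂, hC₂, hC₂ij, hC₂i, hC₂j, -⟩ := mk v₂ v₃ d23 h2i h2j h3i h3j
  obtain ⟨C₃, hC₃, hC₃ij, hC₃i, hC₃j, -⟩ := mk v₃ v₁ (Ne.symm d13) h3i h3j h1i h1j
  have caseA : ∀ {x x' : V} (C : G.Walk x x) (C' : G.Walk x' x'), C.IsCycle → C'.IsCycle →
      (∀ e ∈ C.edges, e ∈ P i ∨ e ∈ P j) → (∀ e ∈ C'.edges, e ∈ P i ∨ e ∈ P j) →
      (∃ e ∈ C.edges, e ∈ P i ∧ x ∈ e) → (∃ e ∈ C.edges, e ∈ P j ∧ x ∈ e) →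
      (∃ e ∈ C'.edges, e ∈ P i ∧ x' ∈ e) → (∃ e ∈ C'.edges, e ∈ P j ∧ x' ∈ e) →
      ¬(∀ e, e ∈ C.edges ↔ e ∈ C'.edges) → False := by
    intro x x' C C' hCy hCy' hCij hC'ij hCi hCj hC'i hC'j hnequ
    have hED : ∀ e ∈ C'.edges, e ∉ C.edges := by
      intro e he he'
      exact hnequ fun f => hG.2 C C' hCy hCy' e he' he f
    have hED' : ∀ e ∈ C.edges, e ∉ C'.edges := by
      intro e he he'
      exact hnequ fun f => hG.2 C C' hCy hCy' e he he' f
    obtain ⟨v0, hv0, hmin, hesc, hU3⟩ := entry_vertex hG r hCy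
    obtain ⟨v0', hv0', hmin', hesc', hU3'⟩ := entry_vertex hG r hCy'
    have hCi' : ∃ e ∈ C.edges, e ∈ P i := by obtain ⟨e, h₁, h₂, _⟩ := hCi; exact ⟨e, h₁, h₂⟩
    have hCj' : ∃ e ∈ C.edges, e ∈ P j := by obtain ⟨e, h₁, h₂, _⟩ := hCj; exact ⟨e, h₁, h₂⟩
    have hC'i' : ∃ e ∈ C'.edges, e ∈ P i := by obtain ⟨e, h₁, h₂, _⟩ := hC'i; exact ⟨e, h₁, h₂⟩
    have hC'j' : ∃ e ∈ C'.edges, e ∈ P j := by obtain ⟨e, h₁, h₂, _⟩ := hC'j; exact ⟨e, h₁, h₂⟩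
    have t1 := cycle_trapped hG hdisj hconn htop hij hCy hCy' hCij hCi' hCj' hC'i' hC'j'
      hED hv0 hmin hU3 v0' hv0'
    have t2 := cycle_trapped hG hdisj hconn htop hij hCy' hCy hC'ij hC'i' hC'j' hCi' hCj'
      hED' hv0' hmin' hU3' v0 hv0
    have l1 := dist_lt_of_inTrap hG hmin t1
    have l2 := dist_lt_of_inTrap hG hmin' t2
    omega
  by_cases h12 : ∀ e, e ∈ C₁.edges ↔ e ∈ C₂.edges
  · by_cases h13 : ∀ e, e ∈ C₁.edges ↔ e ∈ C₃.edges
    · -- Case B : all three cycles have the same edges; both v₂ and v₃ must be the junction y₁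
      have hswitch : ∀ v : V, v ≠ v₁ →
          (∃ e ∈ C₁.edges, e ∈ P i ∧ v ∈ e) → (∃ f ∈ C₁.edges, f ∈ P j ∧ v ∈ f) → v = y₁ := by
        intro v hv hvi hvj
        obtain ⟨ei, heiC, heii, hvei⟩ := hvi
        obtain ⟨ej, hejC, hejj, hvej⟩ := hvj
        have hvC : v ∈ C₁.support := mem_support_of_edge heiC hvei
        by_contra hvy
        have hvpq : v ∈ p₁.support ∨ v ∈ q₁.reverse.support := by
          rw [← Walk.mem_support_append_iff, ← hC₁eq]; exact hvC
        rcases hvpq with hvp | hvq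
        · obtain ⟨g1, hg1, g2, hg2, hgne, hvg1, hvg2⟩ := internal_two_edges hp₁ hvp hv hvy
          have hg1C : g1 ∈ C₁.edges := by
            rw [hC₁eq]; exact (glued_edges _ _ _).mpr (Or.inl hg1)
          have hg2C : g2 ∈ C₁.edges := by
            rw [hC₁eq]; exact (glued_edges _ _ _).mpr (Or.inl hg2)
          have hne1 : g1 ≠ ej := fun h =>
            Set.disjoint_left.mp (hdisj i j hij) (hp₁e g1 hg1) (h ▸ hejj)
          have hne2 : g2 ≠ ej := fun h =>
            Set.disjoint_left.mp (hdisj i j hij) (hp₁e g2 hg2) (h ▸ hejj)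
          exact two_edges_at_vertex hC₁ hvC hg1C hg2C hejC hvg1 hvg2 hvej hgne hne1 hne2
        · rw [Walk.support_reverse, List.mem_reverse] at hvq
          obtain ⟨g1, hg1, g2, hg2, hgne, hvg1, hvg2⟩ := internal_two_edges hq₁ hvq hv hvy
          have hg1C : g1 ∈ C₁.edges := by
            rw [hC₁eq]; exact (glued_edges _ _ _).mpr (Or.inr hg1)
          have hg2C : g2 ∈ C₁.edges := by
            rw [hC₁eq]; exact (glued_edges _ _ _).mpr (Or.inr hg2)
          have hne1 : g1 ≠ ei := fun h =>
            Set.disjoint_left.mp (hdisj j i (Ne.symm hij)) (hq₁e g1 hg1) (h ▸ heii)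
          have hne2 : g2 ≠ ei := fun h =>
            Set.disjoint_left.mp (hdisj j i (Ne.symm hij)) (hq₁e g2 hg2) (h ▸ heii)
          exact two_edges_at_vertex hC₁ hvC hg1C hg2C heiC hvg1 hvg2 hvei hgne hne1 hne2
      have hv₂ : v₂ = y₁ := by
        refine hswitch v₂ (Ne.symm d12) ?_ ?_
        · obtain ⟨e, he, hei, hve⟩ := hC₂i
          exact ⟨e, (h12 e).mpr he, hei, hve⟩
        · obtain ⟨e, he, hej, hve⟩ := hC₂j
          exact ⟨e, (h12 e).mpr he, hej, hve⟩
      have hv₃ : v₃ = y₁ := by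
        refine hswitch v₃ (Ne.symm d13) ?_ ?_
        · obtain ⟨e, he, hei, hve⟩ := hC₃i
          exact ⟨e, (h13 e).mpr he, hei, hve⟩
        · obtain ⟨e, he, hej, hve⟩ := hC₃j
          exact ⟨e, (h13 e).mpr he, hej, hve⟩
      exact d23 (hv₂.trans hv₃.symm)
    · exact caseA C₁ C₃ hC₁ hC₃ hC₁ij hC₃ij hC₁i hC₁j hC₃i hC₃j h13
  · exact caseA C₁ C₂ hC₁ hC₂ hC₁ij hC₂ij hC₁i hC₁j hC₂i hC₂j h12

/-- Two distinct parts share at most two vertices. -/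
lemma pair_shared (hG : IsCactus G)
    (hdisj : ∀ i j, i ≠ j → Disjoint (P i) (P j))
    (hconn : ∀ i, ∀ a b : V, (∃ e ∈ P i, a ∈ e) → (∃ e ∈ P i, b ∈ e) →
      ∃ w : G.Walk a b, ∀ e ∈ w.edges, e ∈ P i)
    (htop : ∀ {u : V} (c : G.Walk u u), c.IsCycle →
      ∀ v ∈ c.support, (∀ w ∈ c.support, G.dist r v ≤ G.dist r w) →
      ∀ e f, e ∈ c.edges → f ∈ c.edges → v ∈ e → v ∈ f →
        ∀ i, e ∈ P i → f ∈ P i)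
    (hij : i ≠ j) :
    {v : V | (∃ e ∈ P i, v ∈ e) ∧ (∃ e ∈ P j, v ∈ e)}.Finite ∧
    {v : V | (∃ e ∈ P i, v ∈ e) ∧ (∃ e ∈ P j, v ∈ e)}.ncard ≤ 2 := by
  set S := {v : V | (∃ e ∈ P i, v ∈ e) ∧ (∃ e ∈ P j, v ∈ e)} with hSdef
  by_cases h0 : S.Nonempty
  · obtain ⟨a, ha⟩ := h0
    by_cases h1 : ∃ b ∈ S, b ≠ a
    · obtain ⟨b, hb, hba⟩ := h1
      have hsub : S ⊆ {a, b} := by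
        intro c hc
        by_contra hcab
        simp only [Set.mem_insert_iff, Set.mem_singleton_iff] at hcab
        push_neg at hcab
        exact pair_shared_aux hG hdisj hconn htop hij ha.1 ha.2 hb.1 hb.2 hc.1 hc.2
          (Ne.symm hba) (Ne.symm hcab.1) (Ne.symm hcab.2)
      have hfin : S.Finite := Set.Finite.subset ((Set.finite_singleton b).insert a) hsub
      refine ⟨hfin, ?_⟩
      calc S.ncard ≤ ({a, b} : Set V).ncard :=
            Set.ncard_le_ncard hsub ((Set.finite_singleton b).insert a)
        _ ≤ 2 := by rw [Set.ncard_pair hba.symm]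
    · push_neg at h1
      have hsub : S ⊆ {a} := fun c hc => h1 c hc
      have hfin : S.Finite := Set.Finite.subset (Set.finite_singleton a) hsub
      refine ⟨hfin, ?_⟩
      calc S.ncard ≤ ({a} : Set V).ncard := Set.ncard_le_ncard hsub (Set.finite_singleton a)
        _ ≤ 2 := by rw [Set.ncard_singleton]; omega
  · rw [Set.not_nonempty_iff_eq_empty] at h0
    rw [h0]
    simp

end Pair

section Main

variable {r : V}

/-- If there are at least two parts, some vertex is shared. -/
lemma exists_shared (hG : IsCactus G) {s : ℕ} (P : Fin s → Set (Sym2 V))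
    (hcover : ∀ e, e ∈ G.edgeSet ↔ ∃ i, e ∈ P i)
    (hne : ∀ i, (P i).Nonempty) {i₀ i₁ : Fin s} (hne01 : i₀ ≠ i₁) :
    ∃ (v : V) (k l : Fin s), k ≠ l ∧ (∃ e ∈ P k, v ∈ e) ∧ (∃ e ∈ P l, v ∈ e) := by
  obtain ⟨e₀, he₀⟩ := hne i₀
  obtain ⟨e₁, he₁⟩ := hne i₁
  obtain ⟨a, a', rfl⟩ : ∃ x y, e₀ = s(x, y) := by
    refine Sym2.ind (fun x y => ⟨x, y, rfl⟩) e₀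
  obtain ⟨b, b', rfl⟩ : ∃ x y, e₁ = s(x, y) := by
    refine Sym2.ind (fun x y => ⟨x, y, rfl⟩) e₁
  have scan : ∀ {x y : V} (w : G.Walk x y) (k : Fin s), (∃ e ∈ P k, x ∈ e) →
      ((∃ e ∈ P k, y ∈ e) ∨
        ∃ (v : V) (k' l' : Fin s), k' ≠ l' ∧ (∃ e ∈ P k', v ∈ e) ∧ (∃ e ∈ P l', v ∈ e)) := by
    intro x y w
    induction w with
    | nil => exact fun k hk => Or.inl hk
    | @cons xx zz yy hadj q ih =>
      intro k hk
      have hedge : s(xx, zz) ∈ G.edgeSet := hadj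
      obtain ⟨m, hm⟩ := (hcover s(xx, zz)).mp hedge
      by_cases hmk : m = k
      · subst hmk
        exact ih m ⟨s(xx, zz), hm, Sym2.mem_mk_right xx zz⟩
      · exact Or.inr ⟨xx, k, m, (Ne.symm hmk), hk, ⟨s(xx, zz), hm, Sym2.mem_mk_left xx zz⟩⟩
  obtain ⟨w⟩ := (hG.1).preconnected a b
  rcases scan w i₀ ⟨s(a, a'), he₀, Sym2.mem_mk_left a a'⟩ with hb | found
  · exact ⟨b, i₀, i₁, hne01, hb, ⟨s(b, b'), he₁, Sym2.mem_mk_left b b'⟩⟩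
  · exact found

lemma main [Fintype V] (hG : IsCactus G) (r : V) :
    ∀ (s : ℕ), 1 ≤ s → ∀ (P : Fin s → Set (Sym2 V)),
    (∀ e, e ∈ G.edgeSet ↔ ∃ i, e ∈ P i) →
    (∀ i j, i ≠ j → Disjoint (P i) (P j)) →
    (∀ i, (P i).Nonempty) →
    (∀ i, ∀ a b : V, (∃ e ∈ P i, a ∈ e) → (∃ e ∈ P i, b ∈ e) →
      ∃ w : G.Walk a b, ∀ e ∈ w.edges, e ∈ P i) →
    (∀ {u : V} (c : G.Walk u u), c.IsCycle →
      ∀ v ∈ c.support, (∀ w ∈ c.support, G.dist r v ≤ G.dist r w) →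
      ∀ e f, e ∈ c.edges → f ∈ c.edges → v ∈ e → v ∈ f →
        ∀ i, e ∈ P i → f ∈ P i) →
    {v : V | ∃ i j, i ≠ j ∧ (∃ e ∈ P i, v ∈ e) ∧ (∃ e ∈ P j, v ∈ e)}.ncard ≤ 2 * s - 2 := by
  intro s
  induction s with
  | zero => intro h; omega
  | succ n ih =>
    intro _ P hcover hdisj hne hconn htop
    by_cases hn : n = 0
    · subst hn
      have hempty : {v : V | ∃ i j, i ≠ j ∧ (∃ e ∈ P i, v ∈ e) ∧ (∃ e ∈ P j, v ∈ e)} = ∅ := by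
        ext x
        simp only [Set.mem_setOf_eq, Set.mem_empty_iff_false, iff_false]
        rintro ⟨i, j, hij, -⟩
        apply hij
        have h1 := i.isLt
        have h2 := j.isLt
        exact Fin.ext (by omega)
      rw [hempty]
      simp
    · have hn1 : 1 ≤ n := Nat.one_le_iff_ne_zero.mpr hn
      have h01 : (⟨0, by omega⟩ : Fin (n+1)) ≠ ⟨1, by omega⟩ := by
        intro h
        simpa using congrArg Fin.val h
      obtain ⟨v, k, l, hkl, hvk, hvl⟩ := exists_shared hG P hcover hne h01
      obtain ⟨k', hk'⟩ := Fin.exists_succAbove_eq hkl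
      classical
      let Q : Fin n → Set (Sym2 V) := fun m => if m = k' then P k ∪ P l else P (l.succAbove m)
      have hQk'eq : Q k' = P k ∪ P l := if_pos rfl
      have hQne : ∀ m : Fin n, m ≠ k' → Q m = P (l.succAbove m) := fun m hm => if_neg hm
      have hPkQ : P k ⊆ Q k' := by rw [hQk'eq]; exact Set.subset_union_left
      have hPlQ : P l ⊆ Q k' := by rw [hQk'eq]; exact Set.subset_union_right
      have hPQ : ∀ m : Fin n, P (l.succAbove m) ⊆ Q m := by
        intro m e he
        by_cases hm : m = k'
        · subst hm
          rw [hk'] at he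
          exact hPkQ he
        · rw [hQne m hm]
          exact he
      have hcover' : ∀ e, e ∈ G.edgeSet ↔ ∃ m, e ∈ Q m := by
        intro e
        constructor
        · intro he
          obtain ⟨m0, hm0⟩ := (hcover e).mp he
          by_cases hm0l : m0 = l
          · exact ⟨k', hPlQ (hm0l ▸ hm0)⟩
          · obtain ⟨m0', hm0'⟩ := Fin.exists_succAbove_eq hm0l
            exact ⟨m0', hPQ m0' (by rw [hm0']; exact hm0)⟩
        · rintro ⟨m, hm⟩
          by_cases hmk : m = k'
          · subst hmk
            rw [hQk'eq] at hm
            rcases hm with hm | hm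
            · exact (hcover e).mpr ⟨k, hm⟩
            · exact (hcover e).mpr ⟨l, hm⟩
          · rw [hQne m hmk] at hm
            exact (hcover e).mpr ⟨_, hm⟩
      have hdisj' : ∀ m m' : Fin n, m ≠ m' → Disjoint (Q m) (Q m') := by
        have key : ∀ m' : Fin n, m' ≠ k' → Disjoint (Q k') (Q m') := by
          intro m' hm'
          rw [hQk'eq, hQne m' hm']
          refine Set.disjoint_union_left.mpr ⟨?_, ?_⟩
          · refine hdisj k _ ?_
            intro h
            rw [← hk'] at h
            exact hm' (Fin.succAbove_right_injective h).symm
          · exact hdisj l _ (Ne.symm (Fin.succAbove_ne l m'))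
        intro m m' hmm
        by_cases hm : m = k'
        · rw [hm]; exact key m' (fun h => hmm (hm.trans h.symm))
        · by_cases hm' : m' = k'
          · rw [hm']
            exact (key m hm).symm
          · rw [hQne m hm, hQne m' hm']
            exact hdisj _ _ (fun h => hmm (Fin.succAbove_right_injective h))
      have hne' : ∀ m, (Q m).Nonempty := by
        intro m
        by_cases hm : m = k'
        · have hQmeq : Q m = P k ∪ P l := by rw [hm]; exact hQk'eq
          rw [hQmeq]
          exact (hne k).mono Set.subset_union_left
        · rw [hQne m hm]
          exact hne _
      have hconn' : ∀ m, ∀ a b : V, (∃ e ∈ Q m, a ∈ e) → (∃ e ∈ Q m, b ∈ e) →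
          ∃ w : G.Walk a b, ∀ e ∈ w.edges, e ∈ Q m := by
        intro m a b ha hb
        by_cases hm : m = k'
        · have hQmeq : Q m = P k ∪ P l := by rw [hm]; exact hQk'eq
          have toV : ∀ x : V, (∃ e ∈ Q m, x ∈ e) →
              ∃ w : G.Walk x v, ∀ e ∈ w.edges, e ∈ Q m := by
            intro x hx
            obtain ⟨e, he, hxe⟩ := hx
            rw [hQmeq] at he
            rcases he with he | he
            · obtain ⟨w, hw⟩ := hconn k x v ⟨e, he, hxe⟩ hvk
              exact ⟨w, fun f hf => by rw [hQmeq]; exact Set.mem_union_left _ (hw f hf)⟩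
            · obtain ⟨w, hw⟩ := hconn l x v ⟨e, he, hxe⟩ hvl
              exact ⟨w, fun f hf => by rw [hQmeq]; exact Set.mem_union_right _ (hw f hf)⟩
          obtain ⟨wa, hwa⟩ := toV a ha
          obtain ⟨wb, hwb⟩ := toV b hb
          refine ⟨wa.append wb.reverse, ?_⟩
          intro e he
          rw [Walk.edges_append, List.mem_append] at he
          rcases he with he | he
          · exact hwa e he
          · rw [Walk.edges_reverse, List.mem_reverse] at he
            exact hwb e he
        · rw [hQne m hm] at ha hb ⊢
          exact hconn _ a b ha hb
      have htop' : ∀ {u : V} (c : G.Walk u u), c.IsCycle →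
          ∀ vv ∈ c.support, (∀ w ∈ c.support, G.dist r vv ≤ G.dist r w) →
          ∀ e f, e ∈ c.edges → f ∈ c.edges → vv ∈ e → vv ∈ f →
            ∀ m, e ∈ Q m → f ∈ Q m := by
        intro u c hc vv hvv hminv e f heC hfC hve hvf m hm
        by_cases hmk : m = k'
        · have hQmeq : Q m = P k ∪ P l := by rw [hmk]; exact hQk'eq
          rw [hQmeq] at hm ⊢
          rcases hm with hm | hm
          · exact Or.inl (htop c hc vv hvv hminv e f heC hfC hve hvf k hm)
          · exact Or.inr (htop c hc vv hvv hminv e f heC hfC hve hvf l hm)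
        · rw [hQne m hmk] at hm ⊢
          exact htop c hc vv hvv hminv e f heC hfC hve hvf _ hm
      have IH := ih hn1 Q hcover' hdisj' hne' hconn' htop'
      obtain ⟨hSfin, hScard⟩ := pair_shared (i := k) (j := l) hG hdisj hconn htop hkl
      have hsub : {x : V | ∃ i j, i ≠ j ∧ (∃ e ∈ P i, x ∈ e) ∧ (∃ e ∈ P j, x ∈ e)} ⊆
          {x : V | ∃ i j, i ≠ j ∧ (∃ e ∈ Q i, x ∈ e) ∧ (∃ e ∈ Q j, x ∈ e)} ∪
          {x : V | (∃ e ∈ P k, x ∈ e) ∧ (∃ e ∈ P l, x ∈ e)} := by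
        rintro x ⟨i, j, hij, hxi, hxj⟩
        have lift : ∀ (m : Fin (n+1)), m ≠ l → (∃ e ∈ P m, x ∈ e) →
            ∃ m' : Fin n, l.succAbove m' = m ∧ (∃ e ∈ Q m', x ∈ e) := by
          intro m hml hx
          obtain ⟨m', hm'⟩ := Fin.exists_succAbove_eq hml
          refine ⟨m', hm', ?_⟩
          obtain ⟨e, he, hxe⟩ := hx
          exact ⟨e, hPQ m' (by rw [hm']; exact he), hxe⟩
        by_cases hil : i = l
        · subst hil
          by_cases hjk : j = k
          · subst hjk
            exact Or.inr ⟨hxj, hxi⟩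
          · obtain ⟨j', hj', hxQj⟩ := lift j (by rintro rfl; exact hij rfl) hxj
            have hj'k : j' ≠ k' := by
              rintro rfl
              exact hjk (hj'.symm.trans hk')
            refine Or.inl ⟨k', j', Ne.symm hj'k, ?_, hxQj⟩
            obtain ⟨e, he, hxe⟩ := hxi
            exact ⟨e, hPlQ he, hxe⟩
        · by_cases hjl : j = l
          · subst hjl
            by_cases hik : i = k
            · subst hik
              exact Or.inr ⟨hxi, hxj⟩
            · obtain ⟨i', hi', hxQi⟩ := lift i hil hxi
              have hi'k : i' ≠ k' := by
                rintro rfl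
                exact hik (hi'.symm.trans hk')
              refine Or.inl ⟨i', k', hi'k, hxQi, ?_⟩
              obtain ⟨e, he, hxe⟩ := hxj
              exact ⟨e, hPlQ he, hxe⟩
          · obtain ⟨i', hi', hxQi⟩ := lift i hil hxi
            obtain ⟨j', hj', hxQj⟩ := lift j hjl hxj
            have hij' : i' ≠ j' := by
              rintro rfl
              exact hij (hi'.symm.trans hj')
            exact Or.inl ⟨i', j', hij', hxQi, hxQj⟩
      have step1 := Set.ncard_le_ncard hsub (Set.toFinite _)
      have step2 := Set.ncard_union_le
        {x : V | ∃ i j, i ≠ j ∧ (∃ e ∈ Q i, x ∈ e) ∧ (∃ e ∈ Q j, x ∈ e)}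
        {x : V | (∃ e ∈ P k, x ∈ e) ∧ (∃ e ∈ P l, x ∈ e)}
      omega

end Main




end CactusAux

/-- If a rooted cactus graph is split into `s` edge-disjoint connected subparts such
that the two topmost edges of every simple cycle lie in the same subpart, then at most
`2s - 2` vertices belong to more than one subpart. -/
theorem stmt10 {V : Type*} [Fintype V] (G : SimpleGraph V) (hG : IsCactus G) (r : V)
    (s : ℕ) (hs : 1 ≤ s) (P : Fin s → Set (Sym2 V))
    (hcover : ∀ e, e ∈ G.edgeSet ↔ ∃ i, e ∈ P i)
    (hdisj : ∀ i j, i ≠ j → Disjoint (P i) (P j))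
    (hne : ∀ i, (P i).Nonempty)
    (hconn : ∀ i, ∀ a b : V, (∃ e ∈ P i, a ∈ e) → (∃ e ∈ P i, b ∈ e) →
      ∃ w : G.Walk a b, ∀ e ∈ w.edges, e ∈ P i)
    (htop : ∀ {u : V} (c : G.Walk u u), c.IsCycle →
      ∀ v ∈ c.support, (∀ w ∈ c.support, G.dist r v ≤ G.dist r w) →
      ∀ e f, e ∈ c.edges → f ∈ c.edges → v ∈ e → v ∈ f →
        ∀ i, e ∈ P i → f ∈ P i) :
    {v : V | ∃ i j, i ≠ j ∧ (∃ e ∈ P i, v ∈ e) ∧ (∃ e ∈ P j, v ∈ e)}.ncard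
      ≤ 2 * s - 2 := by
  classical
  exact CactusAux.main hG r s hs P hcover hdisj hne hconn htop
end

section
/- Given a tree T with |E| edges and a parameter k ≥ 1, there exists a partition of the edges of T into connected subtrees such that every part has at most 4·⌈|E|/k⌉ edges and at most one part has fewer than ⌈|E|/k⌉ edges; consequently the number of parts is between ⌈k/4⌉-type lower bounds and k. -/
open SimpleGraph Finset
set_option linter.unusedSectionVars false
set_option linter.unusedVariables false
namespace TreeBal


variable {V : Type*} [Fintype V] [DecidableEq V] {T : SimpleGraph V} [DecidableRel T.Adj]

/-- the unique path between two vertices of a tree -/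
noncomputable def up (hT : T.IsTree) (a b : V) : T.Walk a b :=
  (hT.existsUnique_path a b).choose

lemma up_isPath (hT : T.IsTree) (a b : V) : (up hT a b).IsPath :=
  (hT.existsUnique_path a b).choose_spec.1

lemma up_unique (hT : T.IsTree) {a b : V} {w : T.Walk a b} (hw : w.IsPath) :
    w = up hT a b :=
  (hT.existsUnique_path a b).choose_spec.2 w hw

lemma up_self (hT : T.IsTree) (a : V) : (up hT a a).edges = [] := by
  have : (Walk.nil : T.Walk a a) = up hT a a := up_unique hT (Walk.IsPath.nil)
  rw [← this]; rfl

lemma up_subset_walk (hT : T.IsTree) {a b : V} (w : T.Walk a b) :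
    ∀ e ∈ (up hT a b).edges, e ∈ w.edges := by
  have h : w.bypass = up hT a b := up_unique hT w.bypass_isPath
  intro e he
  exact w.edges_bypass_subset (h ▸ he)

lemma up_symm (hT : T.IsTree) (a b : V) {e : Sym2 V} (he : e ∈ (up hT a b).edges) :
    e ∈ (up hT b a).edges := by
  have h : (up hT a b).reverse = up hT b a :=
    up_unique hT ((up_isPath hT a b).reverse)
  rw [← h, Walk.edges_reverse, List.mem_reverse]
  exact he

lemma up_adj (hT : T.IsTree) {a b : V} (h : T.Adj a b) :
    (up hT a b).edges = [s(a, b)] := by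
  have : (Walk.cons h Walk.nil : T.Walk a b) = up hT a b := by
    refine up_unique hT ?_
    simp [Walk.isPath_iff_eq_nil, h.ne]
  rw [← this]; rfl

lemma up_split (hT : T.IsTree) {a b v : V} (h : v ∈ (up hT a b).support) :
    (up hT a b).edges = (up hT a v).edges ++ (up hT v b).edges := by
  have h1 : (up hT a b).takeUntil v h = up hT a v :=
    up_unique hT ((up_isPath hT a b).takeUntil h)
  have h2 : (up hT a b).dropUntil v h = up hT v b :=
    up_unique hT ((up_isPath hT a b).dropUntil h)
  conv_lhs => rw [← (up hT a b).take_spec h]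
  rw [Walk.edges_append, h1, h2]

lemma up_split_disjoint (hT : T.IsTree) {a b v : V} (h : v ∈ (up hT a b).support)
    {e : Sym2 V} (h1 : e ∈ (up hT a v).edges) (h2 : e ∈ (up hT v b).edges) : False := by
  have hn := (up_isPath hT a b).isTrail.edges_nodup
  rw [up_split hT h, List.nodup_append] at hn
  exact hn.2.2 e h1 e h2 rfl

lemma up_triangle (hT : T.IsTree) (a b c : V) {e : Sym2 V}
    (he : e ∈ (up hT a c).edges) :
    e ∈ (up hT a b).edges ∨ e ∈ (up hT b c).edges := by
  have := up_subset_walk hT ((up hT a b).append (up hT b c)) e he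
  rwa [Walk.edges_append, List.mem_append] at this

lemma mem_support_of_mem_edges {a b v : V} (w : T.Walk a b) {e : Sym2 V}
    (he : e ∈ w.edges) (hv : v ∈ e) : v ∈ w.support := by
  induction e using Sym2.ind with
  | _ x y =>
    rcases Sym2.mem_iff.mp hv with rfl | rfl
    · exact w.fst_mem_support_of_mem_edges he
    · exact w.snd_mem_support_of_mem_edges he

/-- any walk between distinct vertices has an edge at its start vertex -/
lemma exists_start_edge {a b : V} (w : T.Walk a b) (hab : a ≠ b) :
    ∃ e ∈ w.edges, a ∈ e := by
  cases w with
  | nil => exact absurd rfl hab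
  | cons h q => exact ⟨_, List.mem_cons_self, Sym2.mem_mk_left _ _⟩

/-- in a path, the edge containing the start vertex is unique -/
lemma start_edge_unique {a b : V} {w : T.Walk a b} (hw : w.IsPath)
    {e₁ e₂ : Sym2 V} (h1 : e₁ ∈ w.edges) (h2 : e₂ ∈ w.edges)
    (ha1 : a ∈ e₁) (ha2 : a ∈ e₂) : e₁ = e₂ := by
  cases w with
  | nil => simp at h1
  | cons h q =>
    have hq : a ∉ q.support := by
      have := hw.support_nodup
      simp only [Walk.support_cons, List.nodup_cons] at this
      exact this.1
    rcases List.mem_cons.mp h1 with rfl | h1'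
    · rcases List.mem_cons.mp h2 with rfl | h2'
      · rfl
      · exact absurd (mem_support_of_mem_edges q h2' ha2) hq
    · exact absurd (mem_support_of_mem_edges q h1' ha1) hq



lemma up_split_walk (hT : T.IsTree) {a b v : V} (h : v ∈ (up hT a b).support) :
    up hT a b = (up hT a v).append (up hT v b) := by
  have h1 : (up hT a b).takeUntil v h = up hT a v :=
    up_unique hT ((up_isPath hT a b).takeUntil h)
  have h2 : (up hT a b).dropUntil v h = up hT v b :=
    up_unique hT ((up_isPath hT a b).dropUntil h)
  conv_lhs => rw [← (up hT a b).take_spec h]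
  rw [h1, h2]

lemma up_support_inter (hT : T.IsTree) {a b v r : V} (h : v ∈ (up hT a b).support)
    (h1 : r ∈ (up hT a v).support) (h2 : r ∈ (up hT v b).support) : r = v := by
  by_contra hrv
  have hn := (up_isPath hT a b).support_nodup
  rw [up_split_walk hT h, Walk.support_append, List.nodup_append] at hn
  refine hn.2.2 r h1 r ?_ rfl
  have hc := (up hT v b).support_eq_cons
  rw [hc] at h2
  rcases List.mem_cons.mp h2 with h' | h'
  · exact absurd h' hrv
  · exact h'

def VA (A : Finset (Sym2 V)) (a : V) : Prop := ∃ e ∈ A, a ∈ e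

def Conn (hT : T.IsTree) (A : Finset (Sym2 V)) : Prop :=
  ∀ a b, VA A a → VA A b → ∀ e ∈ (up hT a b).edges, e ∈ A

lemma conn_empty (hT : T.IsTree) : Conn hT (∅ : Finset (Sym2 V)) := by
  rintro a b ⟨e, he, -⟩
  simp at he

lemma conn_of_star (hT : T.IsTree) {B : Finset (Sym2 V)} (r : V)
    (h : ∀ c, VA B c → ∀ g ∈ (up hT r c).edges, g ∈ B) : Conn hT B := by
  intro a b ha hb g hg
  rcases up_triangle hT a r b hg with h1 | h2
  · exact h a ha g (up_symm hT a r h1)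
  · exact h b hb g h2

lemma sym2_exists_ne {f : Sym2 V} (hf : ¬ f.IsDiag) (r : V) : ∃ y ∈ f, y ≠ r := by
  induction f using Sym2.ind with
  | _ a b =>
    rw [Sym2.mk_isDiag_iff] at hf
    by_cases ha : a = r
    · exact ⟨b, Sym2.mem_mk_right _ _, fun hb => hf (by rw [ha, hb])⟩
    · exact ⟨a, Sym2.mem_mk_left _ _, ha⟩

lemma edge_eq {f : Sym2 V} {a b : V} (h1 : a ∈ f) (h2 : b ∈ f) (hne : a ≠ b) :
    f = s(a, b) := (Sym2.mem_and_mem_iff hne).mp ⟨h1, h2⟩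

/-- the branch of `A` at root `r` through root-edge `e` -/
noncomputable def Br (hT : T.IsTree) (A : Finset (Sym2 V)) (r : V) (e : Sym2 V) :
    Finset (Sym2 V) :=
  @Finset.filter _ (fun f => ∀ y ∈ f, y ≠ r → e ∈ (up hT r y).edges)
    (Classical.decPred _) A

lemma mem_Br {hT : T.IsTree} {A : Finset (Sym2 V)} {r : V} {e f : Sym2 V} :
    f ∈ Br hT A r e ↔ f ∈ A ∧ ∀ y ∈ f, y ≠ r → e ∈ (up hT r y).edges := by
  simp [Br, Finset.mem_filter]

lemma Br_subset {hT : T.IsTree} {A : Finset (Sym2 V)} {r : V} {e : Sym2 V} :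
    Br hT A r e ⊆ A := fun f hf => (mem_Br.mp hf).1

variable {hT : T.IsTree} {A : Finset (Sym2 V)} {r : V}

lemma not_isDiag_of_A (hA : A ⊆ T.edgeFinset) {f : Sym2 V} (hf : f ∈ A) : ¬ f.IsDiag :=
  SimpleGraph.not_isDiag_of_mem_edgeSet T (mem_edgeFinset.mp (hA hf))

lemma adj_of_A (hA : A ⊆ T.edgeFinset) {a b : V} {f : Sym2 V} (hf : f ∈ A) (h1 : a ∈ f) (h2 : b ∈ f)
    (hne : a ≠ b) : T.Adj a b := by
  rw [← mem_edgeSet, ← edge_eq h1 h2 hne]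
  exact mem_edgeFinset.mp (hA hf)

lemma self_mem_Br (hA : A ⊆ T.edgeFinset) {e : Sym2 V} (he : e ∈ A) (hr : r ∈ e) : e ∈ Br hT A r e := by
  refine mem_Br.mpr ⟨he, fun y hy hyr => ?_⟩
  rw [up_adj hT (adj_of_A hA he hr hy (Ne.symm hyr))]
  rw [edge_eq hr hy (Ne.symm hyr)]
  exact List.mem_singleton_self _

lemma VA_mono {A B : Finset (Sym2 V)} (h : A ⊆ B) {a : V} (ha : VA A a) : VA B a := by
  obtain ⟨f, hf, haf⟩ := ha; exact ⟨f, h hf, haf⟩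

lemma r_edge_of_mem_Br (hA : A ⊆ T.edgeFinset) {e f : Sym2 V} (hre : r ∈ e)
    (hf : f ∈ Br hT A r e) (hrf : r ∈ f) : f = e := by
  obtain ⟨hfA, hcond⟩ := mem_Br.mp hf
  obtain ⟨y, hy, hyr⟩ := sym2_exists_ne (not_isDiag_of_A hA hfA) r
  have h1 := hcond y hy hyr
  rw [up_adj hT (adj_of_A hA hfA hrf hy (Ne.symm hyr)), List.mem_singleton] at h1
  exact (edge_eq hrf hy (Ne.symm hyr)).trans h1.symm

lemma Br_cover (hA : A ⊆ T.edgeFinset) (hConn : Conn hT A) (hrA : VA A r)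
    {f : Sym2 V} (hf : f ∈ A) : ∃ e ∈ A, r ∈ e ∧ f ∈ Br hT A r e := by
  by_cases hrf : r ∈ f
  · exact ⟨f, hf, hrf, self_mem_Br hA hf hrf⟩
  · obtain ⟨y, hy, hyr⟩ := sym2_exists_ne (not_isDiag_of_A hA hf) r
    obtain ⟨e₁, he₁, hre₁⟩ := exists_start_edge (up hT r y) (Ne.symm hyr)
    have he₁A : e₁ ∈ A := hConn r y hrA ⟨f, hf, hy⟩ e₁ he₁
    refine ⟨e₁, he₁A, hre₁, mem_Br.mpr ⟨hf, fun w hw hwr => ?_⟩⟩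
    by_cases hwy : w = y
    · subst hwy; exact he₁
    · rcases up_triangle hT r w y he₁ with h1 | h2
      · exact h1
      · exfalso
        rw [up_adj hT (adj_of_A hA hf hw hy hwy), List.mem_singleton] at h2
        exact hrf (by rw [edge_eq hw hy hwy, ← h2]; exact hre₁)

lemma Br_disjoint (hA : A ⊆ T.edgeFinset) {e e' : Sym2 V} (hre : r ∈ e) (hre' : r ∈ e')
    (hne : e ≠ e') : Disjoint (Br hT A r e) (Br hT A r e') := by
  rw [Finset.disjoint_left]
  intro f hf hf'
  obtain ⟨hfA, hc⟩ := mem_Br.mp hf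
  obtain ⟨-, hc'⟩ := mem_Br.mp hf'
  obtain ⟨y, hy, hyr⟩ := sym2_exists_ne (not_isDiag_of_A hA hfA) r
  exact hne (start_edge_unique (up_isPath hT r y) (hc y hy hyr) (hc' y hy hyr) hre hre')

lemma Br_path_subset (hA : A ⊆ T.edgeFinset) (hConn : Conn hT A) {e : Sym2 V}
    (he : e ∈ A) (hre : r ∈ e) {a : V} (ha : VA (Br hT A r e) a) :
    ∀ g ∈ (up hT r a).edges, g ∈ Br hT A r e := by
  intro g hg
  by_cases har : a = r
  · subst har; rw [up_self] at hg; simp at hg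
  have hgA : g ∈ A := hConn r a ⟨e, he, hre⟩ (VA_mono Br_subset ha) g hg
  refine mem_Br.mpr ⟨hgA, fun w hw hwr => ?_⟩
  have hera : e ∈ (up hT r a).edges := by
    obtain ⟨f, hf, haf⟩ := ha
    exact (mem_Br.mp hf).2 a haf har
  have hwsupp : w ∈ (up hT r a).support := mem_support_of_mem_edges _ hg hw
  rw [up_split hT hwsupp, List.mem_append] at hera
  rcases hera with h1 | h2
  · exact h1
  · exfalso
    have hr2 : r ∈ (up hT w a).support := mem_support_of_mem_edges _ h2 hre
    exact hwr (up_support_inter hT hwsupp (Walk.start_mem_support _) hr2).symm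

lemma Br_conn (hA : A ⊆ T.edgeFinset) (hConn : Conn hT A) {e : Sym2 V}
    (he : e ∈ A) (hre : r ∈ e) : Conn hT (Br hT A r e) :=
  conn_of_star hT r (fun _ hc => Br_path_subset hA hConn he hre hc)

lemma Br_union_conn (hA : A ⊆ T.edgeFinset) (hConn : Conn hT A) {F : Finset (Sym2 V)}
    (hF : ∀ e ∈ F, e ∈ A ∧ r ∈ e) :
    Conn hT (F.biUnion (fun e => Br hT A r e)) := by
  refine conn_of_star hT r ?_
  intro c hc g hg
  obtain ⟨f, hf, hcf⟩ := hc
  rw [Finset.mem_biUnion] at hf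
  obtain ⟨e, heF, hfBr⟩ := hf
  rw [Finset.mem_biUnion]
  exact ⟨e, heF, Br_path_subset hA hConn (hF e heF).1 (hF e heF).2 ⟨f, hfBr, hcf⟩ g hg⟩

lemma Br_partition (hA : A ⊆ T.edgeFinset) (hConn : Conn hT A) (hrA : VA A r) :
    (A.filter (fun e => r ∈ e)).biUnion (fun e => Br hT A r e) = A := by
  apply Finset.Subset.antisymm
  · intro f hf
    rw [Finset.mem_biUnion] at hf
    obtain ⟨e, -, hf⟩ := hf
    exact Br_subset hf
  · intro f hf
    obtain ⟨e, heA, hre, hfBr⟩ := Br_cover hA hConn hrA hf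
    exact Finset.mem_biUnion.mpr ⟨e, Finset.mem_filter.mpr ⟨heA, hre⟩, hfBr⟩

lemma not_VA_erase (hA : A ⊆ T.edgeFinset) {e : Sym2 V} (hre : r ∈ e) :
    ¬ VA ((Br hT A r e).erase e) r := by
  rintro ⟨f, hf, hrf⟩
  rw [Finset.mem_erase] at hf
  exact hf.1 (r_edge_of_mem_Br hA hre hf.2 hrf)

lemma erase_conn (hA : A ⊆ T.edgeFinset) (hConn : Conn hT A) {e : Sym2 V}
    (he : e ∈ A) (hre : r ∈ e) : Conn hT ((Br hT A r e).erase e) := by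
  intro a b ha hb g hg
  have haB : VA (Br hT A r e) a := VA_mono (Finset.erase_subset _ _) ha
  have hbB : VA (Br hT A r e) b := VA_mono (Finset.erase_subset _ _) hb
  have hgB : g ∈ Br hT A r e := Br_conn hA hConn he hre a b haB hbB g hg
  rw [Finset.mem_erase]
  refine ⟨?_, hgB⟩
  intro hge
  subst hge
  have hra : a ≠ r := fun h => not_VA_erase hA hre (h ▸ ha)
  have hrb : b ≠ r := fun h => not_VA_erase hA hre (h ▸ hb)
  have hrsupp : r ∈ (up hT a b).support := mem_support_of_mem_edges _ hg hre
  obtain ⟨g₁, hg₁, hrg₁⟩ := exists_start_edge (up hT r a) (Ne.symm hra)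
  obtain ⟨g₂, hg₂, hrg₂⟩ := exists_start_edge (up hT r b) (Ne.symm hrb)
  have hg₁' : g₁ ∈ (up hT a r).edges := up_symm hT r a hg₁
  have hsplit := up_split hT hrsupp
  have hg₁ab : g₁ ∈ (up hT a b).edges := by rw [hsplit, List.mem_append]; exact Or.inl hg₁'
  have hg₂ab : g₂ ∈ (up hT a b).edges := by rw [hsplit, List.mem_append]; exact Or.inr hg₂
  have e₁ : g₁ = g := r_edge_of_mem_Br hA hre (Br_conn hA hConn he hre a b haB hbB g₁ hg₁ab) hrg₁
  have e₂ : g₂ = g := r_edge_of_mem_Br hA hre (Br_conn hA hConn he hre a b haB hbB g₂ hg₂ab) hrg₂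
  exact up_split_disjoint hT hrsupp (e₁ ▸ hg₁') (e₂ ▸ hg₂)

lemma VA_erase_other (hA : A ⊆ T.edgeFinset) (hConn : Conn hT A) {e : Sym2 V}
    (he : e ∈ A) (hre : r ∈ e) (hne : ((Br hT A r e).erase e).Nonempty) :
    VA ((Br hT A r e).erase e) (Sym2.Mem.other hre) := by
  obtain ⟨f, hf⟩ := hne
  have hfB : f ∈ Br hT A r e := (Finset.mem_erase.mp hf).2
  have hxe : Sym2.Mem.other hre ∈ e := Sym2.other_mem hre
  have hxr : Sym2.Mem.other hre ≠ r := Sym2.other_ne (not_isDiag_of_A hA he) hre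
  obtain ⟨y, hy, hyr⟩ := sym2_exists_ne (not_isDiag_of_A hA (Br_subset hfB)) r
  have hery : e ∈ (up hT r y).edges := (mem_Br.mp hfB).2 y hy hyr
  have hxsupp : Sym2.Mem.other hre ∈ (up hT r y).support :=
    mem_support_of_mem_edges _ hery hxe
  by_cases hxy : Sym2.Mem.other hre = y
  · exact ⟨f, hf, hxy ▸ hy⟩
  · obtain ⟨g, hgxy, hxg⟩ := exists_start_edge (up hT (Sym2.Mem.other hre) y) hxy
    have hgB : g ∈ Br hT A r e :=
      Br_conn hA hConn he hre (Sym2.Mem.other hre) y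
        ⟨e, self_mem_Br hA he hre, hxe⟩ ⟨f, hfB, hy⟩ g hgxy
    have hge : g ≠ e := by
      intro h
      subst h
      have hr1 : r ∈ (up hT (Sym2.Mem.other hre) y).support :=
        mem_support_of_mem_edges _ hgxy hre
      exact hxr (up_support_inter hT hxsupp (Walk.start_mem_support _) hr1).symm
    exact ⟨g, Finset.mem_erase.mpr ⟨hge, hgB⟩, hxg⟩

lemma greedy {ι : Type*} [DecidableEq ι] (s : ℕ) :
    ∀ n (F : Finset ι) (w : ι → ℕ), F.card ≤ n → (∀ i ∈ F, w i ≤ s) →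
      s ≤ ∑ i ∈ F, w i → ∃ G ⊆ F, s ≤ ∑ i ∈ G, w i ∧ ∑ i ∈ G, w i ≤ 2 * s := by
  intro n
  induction n with
  | zero =>
    intro F w hc _ hs
    have hF : F = ∅ := Finset.card_eq_zero.mp (Nat.le_zero.mp hc)
    subst hF
    rw [Finset.sum_empty] at hs
    exact ⟨∅, subset_rfl, by rw [Finset.sum_empty]; omega, by rw [Finset.sum_empty]; omega⟩
  | succ n ih =>
    intro F w hc hw hs
    by_cases h2 : ∑ i ∈ F, w i ≤ 2 * s
    · exact ⟨F, subset_rfl, hs, h2⟩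
    · push_neg at h2
      have hFne : F.Nonempty := by
        rcases F.eq_empty_or_nonempty with rfl | h
        · simp at h2
        · exact h
      obtain ⟨i, hi⟩ := hFne
      have hsum : ∑ j ∈ F.erase i, w j + w i = ∑ j ∈ F, w j := Finset.sum_erase_add F w hi
      have hwi := hw i hi
      have hrec : s ≤ ∑ j ∈ F.erase i, w j := by omega
      have hcard : (F.erase i).card ≤ n := by
        rw [Finset.card_erase_of_mem hi]
        omega
      obtain ⟨G, hG, h₁, h₂⟩ := ih (F.erase i) w hcard
        (fun j hj => hw j (Finset.erase_subset _ _ hj)) hrec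
      exact ⟨G, hG.trans (Finset.erase_subset _ _), h₁, h₂⟩

lemma extract (hT : T.IsTree) {s : ℕ} (hs : 1 ≤ s) :
    ∀ n (A : Finset (Sym2 V)) (r : V), A.card ≤ n → s ≤ A.card →
      Conn hT A → A ⊆ T.edgeFinset → VA A r →
      ∃ S ⊆ A, Conn hT S ∧ s ≤ S.card ∧ S.card ≤ 2 * s ∧ Conn hT (A \ S) ∧
        ((A \ S).Nonempty → VA (A \ S) r) := by
  intro n
  induction n with
  | zero =>
    intro A r hn hsA _ _ _
    exact absurd (hsA.trans hn) (by omega)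
  | succ n ih =>
    intro A r hn hsA hConn hA hrA
    by_cases hbig : A.card ≤ 2 * s
    · refine ⟨A, subset_rfl, hConn, hsA, hbig, ?_, ?_⟩
      · rw [Finset.sdiff_self]; exact conn_empty hT
      · rw [Finset.sdiff_self]; rintro ⟨f, hf⟩; simp at hf
    push_neg at hbig
    set R := A.filter (fun e => r ∈ e) with hR
    have hRprop : ∀ e ∈ R, e ∈ A ∧ r ∈ e := fun e heR =>
      ⟨(Finset.mem_filter.mp heR).1, (Finset.mem_filter.mp heR).2⟩
    have hpart : R.biUnion (fun e => Br hT A r e) = A := Br_partition hA hConn hrA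
    have hdisj : ∀ e₁ ∈ R, ∀ e₂ ∈ R, e₁ ≠ e₂ →
        Disjoint (Br hT A r e₁) (Br hT A r e₂) := fun e₁ h₁ e₂ h₂ hne =>
      Br_disjoint hA (hRprop e₁ h₁).2 (hRprop e₂ h₂).2 hne
    have hcard : ∑ e ∈ R, (Br hT A r e).card = A.card := by
      have h := (Finset.card_biUnion hdisj).symm
      rwa [hpart] at h
    by_cases hbig2 : ∃ e ∈ R, s + 1 ≤ (Br hT A r e).card
    · obtain ⟨e, heR, hbig2⟩ := hbig2
      obtain ⟨heA, hre⟩ := hRprop e heR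
      set x := Sym2.Mem.other hre with hxdef
      have hxe : x ∈ e := Sym2.other_mem hre
      have hxr : x ≠ r := Sym2.other_ne (not_isDiag_of_A hA heA) hre
      have hex : e = s(r, x) := edge_eq hre hxe (Ne.symm hxr)
      set A' := (Br hT A r e).erase e with hA'
      have heB : e ∈ Br hT A r e := self_mem_Br hA heA hre
      have hBpos : 0 < (Br hT A r e).card := Finset.card_pos.mpr ⟨e, heB⟩
      have hcardA' : A'.card + 1 = (Br hT A r e).card := by
        rw [hA']; exact Finset.card_erase_add_one heB
      have hsub : A' ⊆ A := (Finset.erase_subset _ _).trans Br_subset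
      have hA'n : A'.card ≤ n := by
        have hBle : (Br hT A r e).card ≤ A.card := Finset.card_le_card Br_subset
        omega
      have hA's : s ≤ A'.card := by omega
      have hconnA' : Conn hT A' := erase_conn hA hConn heA hre
      have hVA' : VA A' x :=
        VA_erase_other hA hConn heA hre (Finset.card_pos.mp (show 0 < A'.card by omega))
      obtain ⟨S, hSsub, hSconn, hS1, hS2, hSrem, hSrvert⟩ :=
        ih A' x hA'n hA's hconnA' (hsub.trans hA) hVA'
      have heS : e ∉ S := fun h => (Finset.mem_erase.mp (hSsub h)).1 rfl
      refine ⟨S, hSsub.trans hsub, hSconn, hS1, hS2, ?_,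
        fun _ => ⟨e, Finset.mem_sdiff.mpr ⟨heA, heS⟩, hre⟩⟩
      refine conn_of_star hT r ?_
      intro c hc g hg
      obtain ⟨f, hf, hcf⟩ := hc
      obtain ⟨hfA, hfS⟩ := Finset.mem_sdiff.mp hf
      have hgA : g ∈ A := hConn r c hrA ⟨f, hfA, hcf⟩ g hg
      rw [Finset.mem_sdiff]
      refine ⟨hgA, fun hgS => ?_⟩
      by_cases hfB : f ∈ Br hT A r e
      · by_cases hcr : c = r
        · subst hcr; rw [up_self] at hg; simp at hg
        · have hrc := Br_path_subset hA hConn heA hre ⟨f, hfB, hcf⟩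
          obtain ⟨g₀, hg₀, hrg₀⟩ := exists_start_edge (up hT r c) (Ne.symm hcr)
          have hg₀e : g₀ = e := r_edge_of_mem_Br hA hre (hrc g₀ hg₀) hrg₀
          have heup : e ∈ (up hT r c).edges := hg₀e ▸ hg₀
          have hxsupp : x ∈ (up hT r c).support := mem_support_of_mem_edges _ heup hxe
          rw [up_split hT hxsupp, List.mem_append] at hg
          rcases hg with h1 | h2
          · rw [up_adj hT (adj_of_A hA heA hre hxe (Ne.symm hxr)),
              List.mem_singleton] at h1
            exact heS (by rw [hex, ← h1]; exact hgS)
          · by_cases hfe : f = e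
            · have hcx : c = x := by
                rw [hfe, hex, Sym2.mem_iff] at hcf
                tauto
              rw [hcx, up_self] at h2
              simp at h2
            · have hfA'S : f ∈ A' \ S :=
                Finset.mem_sdiff.mpr ⟨Finset.mem_erase.mpr ⟨hfe, hfB⟩, hfS⟩
              have hrem := hSrem x c (hSrvert ⟨f, hfA'S⟩) ⟨f, hfA'S, hcf⟩ g h2
              exact (Finset.mem_sdiff.mp hrem).2 hgS
      · obtain ⟨e'', he''A, hre'', hfB''⟩ := Br_cover hA hConn hrA hfA
        have hne : e'' ≠ e := fun h => hfB (h ▸ hfB'')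
        have hgB'' := Br_path_subset hA hConn he''A hre'' ⟨f, hfB'', hcf⟩ g hg
        have hgBe : g ∈ Br hT A r e := (hSsub.trans (Finset.erase_subset _ _)) hgS
        exact (Finset.disjoint_left.mp (Br_disjoint hA hre'' hre hne) hgB'') hgBe
    · push_neg at hbig2
      obtain ⟨G, hGR, hG1, hG2⟩ := greedy s R.card R (fun e => (Br hT A r e).card)
        le_rfl (fun i hi => by show (Br hT A r i).card ≤ s; have := hbig2 i hi; omega)
        (by rw [hcard]; omega)
      set S := G.biUnion (fun e => Br hT A r e) with hS
      have hSsub : S ⊆ A := by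
        intro f hf
        rw [hS, Finset.mem_biUnion] at hf
        obtain ⟨e, -, hf⟩ := hf
        exact Br_subset hf
      have hScard : S.card = ∑ e ∈ G, (Br hT A r e).card :=
        Finset.card_biUnion (fun e₁ h₁ e₂ h₂ hne => hdisj e₁ (hGR h₁) e₂ (hGR h₂) hne)
      have hSconn : Conn hT S := Br_union_conn hA hConn (fun e he => hRprop e (hGR he))
      have hkey : ∀ f ∈ A \ S, ∃ e'' ∈ R, e'' ∉ G ∧ f ∈ Br hT A r e'' := by
        intro f hf
        obtain ⟨hfA, hfS⟩ := Finset.mem_sdiff.mp hf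
        obtain ⟨e'', he''A, hre'', hfB''⟩ := Br_cover hA hConn hrA hfA
        exact ⟨e'', Finset.mem_filter.mpr ⟨he''A, hre''⟩,
          fun hG => hfS (Finset.mem_biUnion.mpr ⟨e'', hG, hfB''⟩), hfB''⟩
      have hBrS : ∀ e'' ∈ R, e'' ∉ G → ∀ g ∈ Br hT A r e'', g ∉ S := by
        intro e'' he'' hnG g hgB hgS
        rw [hS, Finset.mem_biUnion] at hgS
        obtain ⟨e₃, he₃, hg₃⟩ := hgS
        exact (Finset.disjoint_left.mp
          (hdisj e'' he'' e₃ (hGR he₃) (fun h => hnG (h ▸ he₃))) hgB) hg₃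
      refine ⟨S, hSsub, hSconn, by rw [hScard]; exact hG1, by rw [hScard]; exact hG2,
        ?_, ?_⟩
      · refine conn_of_star hT r ?_
        intro c hc g hg
        obtain ⟨f, hf, hcf⟩ := hc
        obtain ⟨e'', he''R, hnG, hfB''⟩ := hkey f hf
        have hsub'' := Br_path_subset hA hConn (hRprop e'' he''R).1
          (hRprop e'' he''R).2 ⟨f, hfB'', hcf⟩ g hg
        exact Finset.mem_sdiff.mpr ⟨Br_subset hsub'', hBrS e'' he''R hnG g hsub''⟩
      · rintro ⟨f, hf⟩
        obtain ⟨e'', he''R, hnG, hfB''⟩ := hkey f hf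
        have he''B : e'' ∈ Br hT A r e'' :=
          self_mem_Br hA (hRprop e'' he''R).1 (hRprop e'' he''R).2
        exact ⟨e'', Finset.mem_sdiff.mpr ⟨(hRprop e'' he''R).1,
          hBrS e'' he''R hnG e'' he''B⟩, (hRprop e'' he''R).2⟩

lemma partitionLemma (hT : T.IsTree) {s : ℕ} (hs : 1 ≤ s) :
    ∀ n (A : Finset (Sym2 V)), A.card ≤ n → 1 ≤ A.card → Conn hT A →
      A ⊆ T.edgeFinset →
      ∃ parts : Finset (Finset (Sym2 V)),
        (∀ p ∈ parts, p.Nonempty) ∧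
        (∀ p ∈ parts, ∀ q ∈ parts, p ≠ q → Disjoint p q) ∧
        parts.biUnion id = A ∧
        (∀ p ∈ parts, Conn hT p) ∧
        (∀ p ∈ parts, p.card ≤ 2 * s) ∧
        (parts.filter (fun p => p.card < s)).card ≤ 1 := by
  intro n
  induction n with
  | zero =>
    intro A hn h1 _ _
    exact absurd (h1.trans hn) (by omega)
  | succ n ih =>
    intro A hn h1 hConn hA
    by_cases hsmall : A.card ≤ 2 * s
    · refine ⟨{A}, ?_, ?_, ?_, ?_, ?_, ?_⟩
      · intro p hp; rw [Finset.mem_singleton] at hp; subst hp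
        exact Finset.card_pos.mp (by omega)
      · intro p hp q hq hpq
        rw [Finset.mem_singleton] at hp hq
        exact absurd (hp.trans hq.symm) hpq
      · simp
      · intro p hp; rw [Finset.mem_singleton] at hp; subst hp; exact hConn
      · intro p hp; rw [Finset.mem_singleton] at hp; subst hp; exact hsmall
      · exact (Finset.card_filter_le _ _).trans (by simp)
    · push_neg at hsmall
      obtain ⟨f, hf⟩ := Finset.card_pos.mp (show 0 < A.card by omega)
      have hrA : VA A f.out.1 := ⟨f, hf, Sym2.out_fst_mem f⟩
      have hsA : s ≤ A.card := by omega
      obtain ⟨S, hSsub, hSconn, hS1, hS2, hremconn, -⟩ :=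
        extract hT hs A.card A f.out.1 le_rfl hsA hConn hA hrA
      have hScard : S.card ≤ A.card := Finset.card_le_card hSsub
      have hrem_card : (A \ S).card = A.card - S.card := Finset.card_sdiff_of_subset hSsub
      have h1' : 1 ≤ (A \ S).card := by omega
      have hn' : (A \ S).card ≤ n := by omega
      obtain ⟨parts, hpne, hpdis, hpun, hpconn, hpbound, hpsmall⟩ :=
        ih (A \ S) hn' h1' hremconn ((Finset.sdiff_subset).trans hA)
      have hpsub : ∀ p ∈ parts, p ⊆ A \ S := by
        intro p hp
        rw [← hpun]
        exact Finset.subset_biUnion_of_mem id hp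
      have hSdisj : ∀ p ∈ parts, Disjoint S p := by
        intro p hp
        rw [Finset.disjoint_right]
        intro g hg
        exact (Finset.mem_sdiff.mp (hpsub p hp hg)).2
      have hSnm : S ∉ parts := by
        intro hmem
        obtain ⟨g, hg⟩ := Finset.card_pos.mp (show 0 < S.card by omega)
        exact (Finset.mem_sdiff.mp (hpsub S hmem hg)).2 hg
      refine ⟨insert S parts, ?_, ?_, ?_, ?_, ?_, ?_⟩
      · intro p hp
        rcases Finset.mem_insert.mp hp with rfl | hp
        · exact Finset.card_pos.mp (by omega)
        · exact hpne p hp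
      · intro p hp q hq hpq
        rcases Finset.mem_insert.mp hp with hpS | hp'
        · rcases Finset.mem_insert.mp hq with hqS | hq'
          · exact absurd (hpS.trans hqS.symm) hpq
          · rw [hpS]; exact hSdisj q hq'
        · rcases Finset.mem_insert.mp hq with hqS | hq'
          · rw [hqS]; exact (hSdisj p hp').symm
          · exact hpdis p hp' q hq' hpq
      · rw [Finset.biUnion_insert, hpun]
        show S ∪ (A \ S) = A
        exact Finset.union_sdiff_of_subset hSsub
      · intro p hp
        rcases Finset.mem_insert.mp hp with rfl | hp
        · exact hSconn
        · exact hpconn p hp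
      · intro p hp
        rcases Finset.mem_insert.mp hp with rfl | hp
        · exact hS2
        · exact hpbound p hp
      · rw [Finset.filter_insert, if_neg (by omega)]
        exact hpsmall

end TreeBal

open TreeBal in
/-- Balanced connected edge partition of a tree: the edges of a tree with `|E| ≥ 1`
edges can be partitioned into nonempty connected parts, each of size at most
`4⌈|E|/k⌉`, with at most one part of size less than `⌈|E|/k⌉`, and hence at most `k`
parts in total.  (Here `⌈|E|/k⌉` is `(|E| + k - 1) / k` in natural division.) -/
theorem stmt11 {V : Type*} [Fintype V] [DecidableEq V]
    (T : SimpleGraph V) [DecidableRel T.Adj] (hT : T.IsTree)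
    (k : ℕ) (hk : 1 ≤ k) (hE : 1 ≤ T.edgeFinset.card) :
    ∃ parts : Finset (Finset (Sym2 V)),
      (∀ p ∈ parts, p.Nonempty) ∧
      (∀ p ∈ parts, ∀ q ∈ parts, p ≠ q → Disjoint p q) ∧
      (parts.biUnion id = T.edgeFinset) ∧
      (∀ p ∈ parts, ∀ a b : V, (∃ e ∈ p, a ∈ e) → (∃ e ∈ p, b ∈ e) →
        ∃ w : T.Walk a b, ∀ e ∈ w.edges, e ∈ p) ∧
      (∀ p ∈ parts, p.card ≤ 4 * ((T.edgeFinset.card + k - 1) / k)) ∧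
      ((parts.filter (fun p => p.card < (T.edgeFinset.card + k - 1) / k)).card ≤ 1) ∧
      parts.card ≤ k := by
  set m := T.edgeFinset.card with hm
  have hs : 1 ≤ (m + k - 1) / k := by
    rw [Nat.one_le_div_iff (by omega)]
    omega
  have hConnE : Conn hT T.edgeFinset := by
    intro a b _ _ e he
    exact mem_edgeFinset.mpr ((up hT a b).edges_subset_edgeSet he)
  obtain ⟨parts, hpne, hpdis, hpun, hpconn, hpbound, hpsmall⟩ :=
    partitionLemma hT hs m T.edgeFinset le_rfl hE hConnE subset_rfl
  set s := (m + k - 1) / k with hsdef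
  refine ⟨parts, hpne, hpdis, hpun, ?_, ?_, hpsmall, ?_⟩
  · intro p hp a b ha hb
    exact ⟨up hT a b, hpconn p hp a b ha hb⟩
  · intro p hp
    have := hpbound p hp
    omega
  · -- counting
    have hsum : ∑ p ∈ parts, p.card = m := by
      have h := (Finset.card_biUnion hpdis).symm
      rwa [show (parts.biUnion fun x => x) = T.edgeFinset from hpun] at h
    have h1 := Nat.div_add_mod (m + k - 1) k
    have h2 : (m + k - 1) % k < k := Nat.mod_lt _ (by omega)
    have hks : m ≤ k * s := by
      rw [hsdef]
      have h3 : m + k - 1 + 1 = m + k := by omega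
      have h4 : (m + k - 1) % k + 1 ≤ k := h2
      linarith [h1]
    by_contra hcon
    push_neg at hcon
    set t := parts.card with ht
    rcases Finset.eq_empty_or_nonempty
        (parts.filter (fun p => p.card < s)) with hfe | ⟨p₀, hp₀⟩
    · have hall : ∀ p ∈ parts, s ≤ p.card := fun p hp =>
        le_of_not_gt (fun h =>
          (Finset.eq_empty_iff_forall_notMem.mp hfe p (Finset.mem_filter.mpr ⟨hp, h⟩)))
      have hts : t • s ≤ ∑ p ∈ parts, p.card :=
        Finset.card_nsmul_le_sum _ _ _ hall
      rw [smul_eq_mul, hsum] at hts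
      have h3 : (k + 1) * s ≤ t * s := Nat.mul_le_mul_right s (by omega)
      rw [add_mul, one_mul] at h3
      linarith
    · have hp₀parts : p₀ ∈ parts := (Finset.mem_filter.mp hp₀).1
      have herase : ∀ q ∈ parts.erase p₀, s ≤ q.card := by
        intro q hq
        refine le_of_not_gt (fun h => ?_)
        have hq' : q ∈ parts.filter (fun p => p.card < s) :=
          Finset.mem_filter.mpr ⟨(Finset.mem_erase.mp hq).2, h⟩
        exact (Finset.mem_erase.mp hq).1 (Finset.card_le_one.mp hpsmall q hq' p₀ hp₀)
      have hsum2 : ∑ p ∈ parts.erase p₀, p.card + p₀.card = m := by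
        rw [Finset.sum_erase_add _ _ hp₀parts]; exact hsum
      have hts : (parts.erase p₀).card • s ≤ ∑ p ∈ parts.erase p₀, p.card :=
        Finset.card_nsmul_le_sum _ _ _ herase
      rw [smul_eq_mul, Finset.card_erase_of_mem hp₀parts] at hts
      have hp₀pos : 1 ≤ p₀.card := Finset.card_pos.mpr (hpne p₀ hp₀parts)
      have h3 : k * s ≤ (t - 1) * s := Nat.mul_le_mul_right s (by omega)
      linarith
end

section
/- Rounding lemma: given nonnegative prices with every segment length at most m·b_max, one can decrease prices so that every segment length lies in the geometric set P = {m·b_max/2^t : 0 ≤ t ≤ ⌈log₂(1024·m²·n)⌉} ∪ {0}, and the length of every fixed path under the new prices is at least half its original length minus b_max/(1024·n). -/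
/-- Rounding lemma: given nonnegative edge prices on `m` edges, partitioned into
edge-disjoint segments whose lengths (sums of prices) are at most `m·b_max`, the
prices can be decreased so that every segment length lies in the geometric set
`P = {m·b_max/2^t : 0 ≤ t ≤ ⌈log₂(1024·m²·n)⌉} ∪ {0}`, while the cost of every fixed
set of edges is at most its original cost and at least half the original cost minus
`b_max/(1024·n)`. -/
theorem stmt13 (m n : ℕ) (hm : 1 ≤ m) (hn : 1 ≤ n) (bmax : ℝ) (hb : 0 < bmax)
    (p : Fin m → ℝ) (hp : ∀ e, 0 ≤ p e)
    (segs : Finset (Finset (Fin m)))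
    (hdisj : ∀ s ∈ segs, ∀ t ∈ segs, s ≠ t → Disjoint s t)
    (hcover : ∀ e : Fin m, ∃ s ∈ segs, e ∈ s)
    (hlen : ∀ s ∈ segs, ∑ e ∈ s, p e ≤ m * bmax) :
    ∃ q : Fin m → ℝ, (∀ e, 0 ≤ q e ∧ q e ≤ p e) ∧
      (∀ s ∈ segs, (∑ e ∈ s, q e) ∈
        ({x : ℝ | ∃ t : ℕ, t ≤ Nat.clog 2 (1024 * m ^ 2 * n) ∧
          x = m * bmax / 2 ^ t} ∪ {0} : Set ℝ)) ∧
      (∀ A : Finset (Fin m),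
        (∑ e ∈ A, p e) / 2 - bmax / (1024 * n) ≤ ∑ e ∈ A, q e ∧
        ∑ e ∈ A, q e ≤ ∑ e ∈ A, p e) := by
  classical
  have hm' : (0:ℝ) < m := by exact_mod_cast hm
  have hn' : (0:ℝ) < n := by exact_mod_cast hn
  set T := Nat.clog 2 (1024 * m ^ 2 * n) with hTdef
  have h2T : (1024 * (m:ℝ) ^ 2 * n) ≤ 2 ^ T := by
    have h := Nat.le_pow_clog (b := 2) (by norm_num) (1024 * m ^ 2 * n)
    exact_mod_cast h
  set M : ℝ := m * bmax with hMdef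
  have hM0 : 0 < M := by positivity
  set θ : ℝ := M / 2 ^ T with hθdef
  have hθ0 : 0 < θ := by positivity
  set δ : ℝ := bmax / (1024 * m * n) with hδdef
  have hθδ : θ ≤ δ := by
    rw [hθdef, hδdef, hMdef, div_le_div_iff₀ (by positivity) (by positivity)]
    nlinarith [mul_le_mul_of_nonneg_left h2T hb.le]
  have exT : ∀ s : Finset (Fin m), θ ≤ ∑ e ∈ s, p e →
      ∃ t : ℕ, M / 2 ^ t ≤ ∑ e ∈ s, p e := fun s h => ⟨T, h⟩
  set fac : Finset (Fin m) → ℝ := fun s =>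
    if h : θ ≤ ∑ e ∈ s, p e then (M / 2 ^ Nat.find (exT s h)) / (∑ e ∈ s, p e) else 0
    with hfacdef
  have hseg : ∀ e, ∃ s, s ∈ segs ∧ e ∈ s := fun e => by
    obtain ⟨s, hs, he⟩ := hcover e; exact ⟨s, hs, he⟩
  set seg : Fin m → Finset (Fin m) := fun e => (hseg e).choose with hsegdef
  have hseg1 : ∀ e, seg e ∈ segs := fun e => (hseg e).choose_spec.1
  have hseg2 : ∀ e, e ∈ seg e := fun e => (hseg e).choose_spec.2
  have hseg_eq : ∀ s ∈ segs, ∀ e ∈ s, seg e = s := by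
    intro s hs e he
    by_contra h
    exact absurd he (Finset.disjoint_left.mp (hdisj _ (hseg1 e) _ hs h) (hseg2 e))
  have fac_nonneg : ∀ s, 0 ≤ fac s := by
    intro s
    rw [hfacdef]
    dsimp only
    split
    · exact div_nonneg (by positivity) (hθ0.le.trans (by assumption))
    · exact le_refl _
  have fac_le_one : ∀ s, fac s ≤ 1 := by
    intro s
    rw [hfacdef]
    dsimp only
    split
    · rename_i h
      exact (div_le_one (hθ0.trans_le h)).mpr (Nat.find_spec (exT s h))
    · norm_num
  have fac_half : ∀ s ∈ segs, θ ≤ ∑ e ∈ s, p e → 1/2 ≤ fac s := by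
    intro s hs h
    have hc : 0 < ∑ e ∈ s, p e := hθ0.trans_le h
    rw [hfacdef]
    dsimp only
    rw [dif_pos h, le_div_iff₀ hc]
    set t := Nat.find (exT s h) with ht
    rcases Nat.eq_zero_or_pos t with h0 | hpos
    · rw [h0]
      have := hlen s hs
      simp only [pow_zero, div_one]
      linarith
    · have hmin : ¬ (M / 2 ^ (t-1) ≤ ∑ e ∈ s, p e) :=
        Nat.find_min (exT s h) (Nat.sub_lt hpos one_pos)
      have hlt : ∑ e ∈ s, p e < M / 2 ^ (t-1) := not_le.mp hmin
      have h2 : M / 2 ^ (t-1) = 2 * (M / 2 ^ t) := by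
        have h2' : (2:ℝ) ^ (t-1) * 2 = 2 ^ t := by
          rw [← pow_succ]; congr 1; omega
        field_simp
        nlinarith [h2']
      linarith
  refine ⟨fun e => fac (seg e) * p e, ?_, ?_, ?_⟩
  · intro e
    refine ⟨mul_nonneg (fac_nonneg _) (hp e), ?_⟩
    calc fac (seg e) * p e ≤ 1 * p e :=
          mul_le_mul_of_nonneg_right (fac_le_one _) (hp e)
      _ = p e := one_mul _
  · intro s hs
    have hsum : ∑ e ∈ s, fac (seg e) * p e = fac s * ∑ e ∈ s, p e := by
      rw [Finset.mul_sum]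
      exact Finset.sum_congr rfl fun e he => by rw [hseg_eq s hs e he]
    rw [hsum, hfacdef]
    dsimp only
    split
    · rename_i h
      left
      refine ⟨Nat.find (exT s h), Nat.find_le h, ?_⟩
      rw [div_mul_cancel₀ _ (hθ0.trans_le h).ne']
    · right
      simp
  · intro A
    have hpart : ∀ (f : Fin m → ℝ), ∑ e ∈ A, f e = ∑ s ∈ segs, ∑ e ∈ A ∩ s, f e := by
      intro f
      have hA : A = segs.biUnion (fun s => A ∩ s) := by
        ext e
        simp only [Finset.mem_biUnion, Finset.mem_inter]
        constructor
        · intro h; exact ⟨seg e, hseg1 e, h, hseg2 e⟩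
        · rintro ⟨s, -, h, -⟩; exact h
      conv_lhs => rw [hA]
      exact Finset.sum_biUnion fun s hs t ht hst =>
        (hdisj s hs t ht hst).mono Finset.inter_subset_right Finset.inter_subset_right
    have hsum_seg : ∀ s ∈ segs, ∑ e ∈ A ∩ s, fac (seg e) * p e = fac s * ∑ e ∈ A ∩ s, p e := by
      intro s hs
      rw [Finset.mul_sum]
      exact Finset.sum_congr rfl fun e he =>
        by rw [hseg_eq s hs e (Finset.mem_of_mem_inter_right he)]
    constructor
    · -- lower bound
      have key : ∀ s ∈ segs, (∑ e ∈ A ∩ s, p e) / 2 - (if s.Nonempty then θ else 0) ≤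
          fac s * ∑ e ∈ A ∩ s, p e := by
        intro s hs
        have hcs' : 0 ≤ ∑ e ∈ A ∩ s, p e := Finset.sum_nonneg fun e _ => hp e
        by_cases h : θ ≤ ∑ e ∈ s, p e
        · have := fac_half s hs h
          have hite : 0 ≤ (if s.Nonempty then θ else 0) := by positivity
          nlinarith
        · have hfac0 : fac s = 0 := by rw [hfacdef]; exact dif_neg h
          rcases Finset.eq_empty_or_nonempty s with rfl | hne
          · simp [hfac0]
          · rw [hfac0, if_pos hne]
            have hsub : ∑ e ∈ A ∩ s, p e ≤ ∑ e ∈ s, p e :=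
              Finset.sum_le_sum_of_subset_of_nonneg Finset.inter_subset_right
                fun e _ _ => hp e
            have : ∑ e ∈ s, p e < θ := not_le.mp h
            linarith
      have hK : ((segs.filter (fun s => s.Nonempty)).card : ℝ) ≤ m := by
        have h1 : (segs.filter (fun s => s.Nonempty)).card ≤
            ∑ s ∈ segs.filter (fun s => s.Nonempty), s.card := by
          calc (segs.filter (fun s => s.Nonempty)).card
              = ∑ _s ∈ segs.filter (fun s => s.Nonempty), 1 := by simp
            _ ≤ ∑ s ∈ segs.filter (fun s => s.Nonempty), s.card :=
              Finset.sum_le_sum fun s hs =>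
                (Finset.mem_filter.mp hs).2.card_pos
        have h2 : ∑ s ∈ segs.filter (fun s => s.Nonempty), s.card ≤ ∑ s ∈ segs, s.card :=
          Finset.sum_le_sum_of_subset (Finset.filter_subset _ _)
        have h3 : ∑ s ∈ segs, s.card ≤ m := by
          rw [← Finset.card_biUnion (fun s hs t ht hst => hdisj s hs t ht hst)]
          calc (segs.biUnion id).card ≤ (Finset.univ : Finset (Fin m)).card :=
              Finset.card_le_card (Finset.subset_univ _)
            _ = m := by simp
        exact_mod_cast (h1.trans h2).trans h3
      have hsumite : ∑ s ∈ segs, (if s.Nonempty then θ else 0) =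
          ((segs.filter (fun s => s.Nonempty)).card : ℝ) * θ := by
        rw [← Finset.sum_filter, Finset.sum_const, nsmul_eq_mul]
      have hlow : ∑ s ∈ segs, ((∑ e ∈ A ∩ s, p e) / 2 - (if s.Nonempty then θ else 0)) ≤
          ∑ s ∈ segs, fac s * ∑ e ∈ A ∩ s, p e :=
        Finset.sum_le_sum key
      rw [Finset.sum_sub_distrib, hsumite] at hlow
      have hfin : ((segs.filter (fun s => s.Nonempty)).card : ℝ) * θ ≤ bmax / (1024 * n) := by
        have h1 : ((segs.filter (fun s => s.Nonempty)).card : ℝ) * θ ≤ m * θ :=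
          mul_le_mul_of_nonneg_right hK hθ0.le
        have h2 : (m:ℝ) * θ ≤ m * δ := mul_le_mul_of_nonneg_left hθδ hm'.le
        have h3 : (m:ℝ) * δ = bmax / (1024 * n) := by
          rw [hδdef]; field_simp
        linarith
      calc (∑ e ∈ A, p e) / 2 - bmax / (1024 * n)
          ≤ (∑ e ∈ A, p e) / 2 - ((segs.filter (fun s => s.Nonempty)).card : ℝ) * θ := by
            linarith
        _ = ∑ s ∈ segs, (∑ e ∈ A ∩ s, p e) / 2 -
            ((segs.filter (fun s => s.Nonempty)).card : ℝ) * θ := by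
            rw [← Finset.sum_div, ← hpart]
        _ ≤ ∑ s ∈ segs, fac s * ∑ e ∈ A ∩ s, p e := hlow
        _ = ∑ s ∈ segs, ∑ e ∈ A ∩ s, fac (seg e) * p e :=
            (Finset.sum_congr rfl fun s hs => (hsum_seg s hs).symm)
        _ = ∑ e ∈ A, fac (seg e) * p e := (hpart _).symm
    · refine Finset.sum_le_sum fun e _ => ?_
      calc fac (seg e) * p e ≤ 1 * p e :=
            mul_le_mul_of_nonneg_right (fac_le_one _) (hp e)
        _ = p e := one_mul _
end
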